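/- arXiv:1806.06996 — 7 statements merged into one kernel-verified Lean document; each statement's English description precedes it below -/
import Mathlib

section
/- Let f : ℝⁿ → ℝ be a homogeneous polynomial (form) of even degree d. Then f^{1/d} is a norm if and only if f is strictly convex. -/
open MvPolynomial Set

lemma eval_smul_homog {n d : ℕ} (p : MvPolynomial (Fin n) ℝ) (hp : p.IsHomogeneous d)
    (c : ℝ) (x : Fin n → ℝ) :
    MvPolynomial.eval (c • x) p = c ^ d * MvPolynomial.eval x p := by
  rw [eval_eq', eval_eq', Finset.mul_sum]
  refine Finset.sum_congr rfl fun m hm => ?_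
  have hdeg : ∑ i, m i = d := by
    have h := hp (mem_support_iff.mp hm)
    rw [Finsupp.weight_apply] at h
    rw [← h, Finsupp.sum]
    rw [Finset.sum_subset (Finset.subset_univ m.support)]
    · simp
    · intro i _ hi
      simp [Finsupp.notMem_support_iff.mp hi]
  calc p.coeff m * ∏ i, (c • x) i ^ m i
      = p.coeff m * ((∏ i, c ^ m i) * ∏ i, x i ^ m i) := by
        rw [← Finset.prod_mul_distrib]; simp [mul_pow]
    _ = c ^ d * (p.coeff m * ∏ i, x i ^ m i) := by
        rw [Finset.prod_pow_eq_pow_sum, hdeg]; ring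

lemma eval_line_poly {n : ℕ} (p : MvPolynomial (Fin n) ℝ) (u w : Fin n → ℝ) (t : ℝ) :
    Polynomial.eval t (MvPolynomial.aeval
      (fun i => Polynomial.C (u i) + Polynomial.C (w i) * Polynomial.X) p)
      = MvPolynomial.eval (u + t • w) p := by
  have huw : (u + t • w) = fun i => u i + w i * t := by
    funext i; simp [mul_comm]
  rw [huw]
  induction p using MvPolynomial.induction_on with
  | C a => simp
  | add q r hq hr => simp [hq, hr]
  | mul_X q i hq => simp [hq]

lemma convex_affine_on_interval {h : ℝ → ℝ} (hc : ConvexOn ℝ Set.univ h) {b : ℝ}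
    (hb0 : 0 < b) (hb1 : b < 1) (hb : h b = (1 - b) * h 0 + b * h 1) :
    ∀ t ∈ Set.Icc (0:ℝ) 1, h t = (1 - t) * h 0 + t * h 1 := by
  have hle : ∀ t ∈ Set.Icc (0:ℝ) 1, h t ≤ (1 - t) * h 0 + t * h 1 := by
    intro t ht
    have := hc.2 (mem_univ (0:ℝ)) (mem_univ (1:ℝ)) (by linarith [ht.2] : (0:ℝ) ≤ 1 - t)
      ht.1 (by ring)
    simpa using this
  intro t ht
  by_contra hne
  have hlt : h t < (1 - t) * h 0 + t * h 1 := lt_of_le_of_ne (hle t ht) hne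
  rcases lt_trichotomy t b with htb | htb | htb
  · -- t < b : b is a convex combination of t and 1
    have h1t : 0 < 1 - t := by linarith
    set θ : ℝ := (1 - b) / (1 - t) with hθ
    have hθ0 : 0 < θ := div_pos (by linarith) h1t
    have hθ1 : θ < 1 := (div_lt_one h1t).mpr (by linarith)
    have hθexp : θ * (1 - t) = 1 - b := by
      rw [hθ, div_mul_cancel₀ _ h1t.ne']
    have hcomb : θ * t + (1 - θ) * 1 = b := by nlinarith [hθexp]
    have hconv := hc.2 (mem_univ t) (mem_univ (1:ℝ)) hθ0.le (by linarith : (0:ℝ) ≤ 1 - θ)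
      (by ring)
    simp only [smul_eq_mul, hcomb] at hconv
    have hcomb' : θ * t + (1 - θ) = b := by linarith [hcomb]
    have hsum : θ * ((1 - t) * h 0 + t * h 1) + (1 - θ) * h 1 = (1 - b) * h 0 + b * h 1 := by
      linear_combination (h 0) * hθexp + (h 1) * hcomb'
    have key := mul_lt_mul_of_pos_left hlt hθ0
    linarith [hconv, key, hsum, hb]
  · exact hne (htb ▸ hb)
  · -- b < t : b is a convex combination of 0 and t
    have ht0 : 0 < t := lt_trans hb0 htb
    set θ : ℝ := b / t with hθ
    have hθ0 : 0 < θ := div_pos hb0 ht0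
    have hθ1 : θ < 1 := (div_lt_one ht0).mpr htb
    have hθexp : θ * t = b := by rw [hθ, div_mul_cancel₀ _ ht0.ne']
    have hcomb : (1 - θ) * 0 + θ * t = b := by linarith [hθexp]
    have hconv := hc.2 (mem_univ (0:ℝ)) (mem_univ t) (by linarith : (0:ℝ) ≤ 1 - θ) hθ0.le
      (by ring)
    simp only [smul_eq_mul, hcomb] at hconv
    have hsum : (1 - θ) * h 0 + θ * ((1 - t) * h 0 + t * h 1) = (1 - b) * h 0 + b * h 1 := by
      linear_combination (h 1 - h 0) * hθexp
    have key := mul_lt_mul_of_pos_left hlt hθ0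
    linarith [hconv, key, hsum, hb]

theorem norm_iff_strictConvex_aux {n d : ℕ} (hd : Even d) (hd0 : 0 < d) (hd2 : 2 ≤ d)
    (f : (Fin n → ℝ) → ℝ)
    (hsmul : ∀ (c : ℝ) (x : Fin n → ℝ), f (c • x) = c ^ d * f x)
    (hline : ∀ u w : Fin n → ℝ, ∃ P : Polynomial ℝ, ∀ t, Polynomial.eval t P = f (u + t • w)) :
    (∃ g : (Fin n → ℝ) → ℝ,
      (∀ x, g x ^ d = f x) ∧
      (∀ x, x ≠ 0 → 0 < g x) ∧
      g 0 = 0 ∧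
      (∀ (c : ℝ) (x : Fin n → ℝ), g (c • x) = |c| * g x) ∧
      (∀ x y : Fin n → ℝ, g (x + y) ≤ g x + g y)) ↔
    StrictConvexOn ℝ Set.univ f := by
  have hf0 : f 0 = 0 := by
    have := hsmul 0 0
    simpa [zero_pow hd0.ne'] using this
  constructor
  · rintro ⟨g, hgd, hgpos, hg0, hgsmul, hgadd⟩
    have hgnn : ∀ x, 0 ≤ g x := by
      intro x
      rcases eq_or_ne x 0 with h | h
      · simp [h, hg0]
      · exact (hgpos x h).le
    have hfpos : ∀ x, x ≠ 0 → 0 < f x := by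
      intro x hx
      rw [← hgd x]
      exact pow_pos (hgpos x hx) d
    have hfc : ConvexOn ℝ Set.univ f := by
      refine ⟨convex_univ, fun x _ y _ a b ha hb hab => ?_⟩
      have h1 : g (a • x + b • y) ≤ a * g x + b * g y := by
        calc g (a • x + b • y) ≤ g (a • x) + g (b • y) := hgadd _ _
          _ = a * g x + b * g y := by
              rw [hgsmul, hgsmul, abs_of_nonneg ha, abs_of_nonneg hb]
      calc f (a • x + b • y) = g (a • x + b • y) ^ d := (hgd _).symm
        _ ≤ (a * g x + b * g y) ^ d := pow_le_pow_left₀ (hgnn _) h1 d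
        _ ≤ a * g x ^ d + b * g y ^ d := by
            have := (Even.convexOn_pow hd).2 (mem_univ (g x)) (mem_univ (g y)) ha hb hab
            simpa [smul_eq_mul] using this
        _ = a * f x + b * f y := by rw [hgd, hgd]
    refine ⟨convex_univ, fun x _ y _ hxy a b ha hb hab => ?_⟩
    by_contra hcon
    push_neg at hcon
    simp only [smul_eq_mul] at hcon
    have heq : f (a • x + b • y) = a * f x + b * f y :=
      le_antisymm (by simpa using hfc.2 (mem_univ x) (mem_univ y) ha.le hb.le hab) hcon
    have hab' : a = 1 - b := by linarith
    subst hab'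
    have hvne : y - x ≠ 0 := sub_ne_zero.mpr (Ne.symm hxy)
    have hb1 : b < 1 := by linarith
    -- the restriction of f to the line through x and y is convex
    have hqc : ConvexOn ℝ Set.univ (fun t : ℝ => f (x + t • (y - x))) := by
      have hcomp := hfc.comp_affineMap (AffineMap.lineMap x y : ℝ →ᵃ[ℝ] (Fin n → ℝ))
      simp only [Set.preimage_univ] at hcomp
      have hfun : (fun t : ℝ => f (x + t • (y - x))) = f ∘ (AffineMap.lineMap x y) := by
        funext t
        simp only [Function.comp_apply, AffineMap.lineMap_apply_module]
        congr 1
        module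
      rw [hfun]
      exact hcomp
    have hqb : (fun t : ℝ => f (x + t • (y - x))) b
        = (1 - b) * (fun t : ℝ => f (x + t • (y - x))) 0
          + b * (fun t : ℝ => f (x + t • (y - x))) 1 := by
      have hpt : x + b • (y - x) = (1 - b) • x + b • y := by module
      have hy' : x + (y - x) = y := by module
      simp only [hpt, zero_smul, add_zero, one_smul, hy']
      exact heq
    have haff : ∀ t ∈ Set.Icc (0:ℝ) 1, f (x + t • (y - x)) = (1 - t) * f x + t * f y := by
      intro t ht
      have := convex_affine_on_interval hqc hb hb1 hqb t ht
      simpa using this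
    obtain ⟨Q, hQeval⟩ := hline x (y - x)
    obtain ⟨R, hReval⟩ := hline (y - x) x
    have hQaffine : Q = Polynomial.C (f x) + Polynomial.C (f y - f x) * Polynomial.X := by
      apply Polynomial.eq_of_infinite_eval_eq
      apply Set.Infinite.mono (s := Set.Icc (0:ℝ) 1)
      · intro t ht
        simp only [Set.mem_setOf_eq, Polynomial.eval_add, Polynomial.eval_C,
          Polynomial.eval_mul, Polynomial.eval_X]
        rw [hQeval t, haff t ht]
        ring
      · exact Set.Icc_infinite (by norm_num)
    have hRform : R = Polynomial.C (f x) * Polynomial.X ^ d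
        + Polynomial.C (f y - f x) * Polynomial.X ^ (d - 1) := by
      apply Polynomial.eq_of_infinite_eval_eq
      apply Set.Infinite.mono (s := Set.Ioi (1:ℝ))
      · intro s hs
        have hs0 : (0:ℝ) < s := lt_trans one_pos hs
        simp only [Set.mem_setOf_eq, Polynomial.eval_add, Polynomial.eval_C,
          Polynomial.eval_mul, Polynomial.eval_X, Polynomial.eval_pow]
        have hpt : (y - x) + s • x = s • (x + s⁻¹ • (y - x)) := by
          rw [smul_add, smul_smul, mul_inv_cancel₀ hs0.ne', one_smul]
          abel
        rw [hReval s, hpt, hsmul s (x + s⁻¹ • (y - x)), ← hQeval s⁻¹, hQaffine]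
        simp only [Polynomial.eval_add, Polynomial.eval_C, Polynomial.eval_mul,
          Polynomial.eval_X]
        have hpow : s ^ d = s ^ (d - 1) * s := by
          rw [← pow_succ, Nat.sub_add_cancel (le_trans one_le_two hd2)]
        rw [hpow]
        field_simp
      · exact Set.Ioi_infinite 1
    have hfv : f (y - x) = 0 := by
      have h0 := hReval 0
      rw [hRform] at h0
      simp only [Polynomial.eval_add, Polynomial.eval_mul, Polynomial.eval_C,
        Polynomial.eval_pow, Polynomial.eval_X] at h0
      rw [zero_pow hd0.ne', zero_pow (by omega : d - 1 ≠ 0)] at h0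
      simpa using h0.symm
    exact absurd hfv (hfpos (y - x) hvne).ne'
  · intro hsc
    have hfneg : ∀ x, f (-x) = f x := by
      intro x
      rw [show (-x : Fin n → ℝ) = (-1 : ℝ) • x from (neg_one_smul ℝ x).symm,
        hsmul, hd.neg_one_pow, one_mul]
    have hfpos : ∀ x, x ≠ 0 → 0 < f x := by
      intro x hx
      have hne : x ≠ -x := by
        intro h
        apply hx
        funext i
        have h2 := congrFun h i
        simp only [Pi.neg_apply] at h2
        have : x i = 0 := by linarith
        simpa using this
      have hkey := hsc.2 (mem_univ x) (mem_univ (-x)) hne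
        (by norm_num : (0:ℝ) < 1/2) (by norm_num : (0:ℝ) < 1/2) (by norm_num)
      have hmid : (1/2 : ℝ) • x + (1/2 : ℝ) • (-x) = (0 : Fin n → ℝ) := by module
      rw [hmid, hf0, hfneg x, smul_eq_mul] at hkey
      linarith
    have hfnn : ∀ x, 0 ≤ f x := by
      intro x
      rcases eq_or_ne x 0 with h | h
      · simp [h, hf0]
      · exact (hfpos x h).le
    have hdR : ((d:ℝ))⁻¹ ≠ 0 := inv_ne_zero (Nat.cast_ne_zero.mpr hd0.ne')
    have hG1 : ∀ x, (f x ^ ((d:ℝ)⁻¹)) ^ d = f x := fun x =>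
      Real.rpow_inv_natCast_pow (hfnn x) hd0.ne'
    have hG2 : ∀ x, x ≠ 0 → 0 < f x ^ ((d:ℝ)⁻¹) := fun x hx =>
      Real.rpow_pos_of_pos (hfpos x hx) _
    have hG3 : f 0 ^ ((d:ℝ)⁻¹) = (0:ℝ) := by
      rw [hf0]; exact Real.zero_rpow hdR
    have hG4 : ∀ (c : ℝ) (x : Fin n → ℝ),
        f (c • x) ^ ((d:ℝ)⁻¹) = |c| * f x ^ ((d:ℝ)⁻¹) := by
      intro c x
      have habs : f (c • x) = |c| ^ d * f x := by
        rw [hsmul]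
        congr 1
        rw [← abs_pow, abs_of_nonneg (hd.pow_nonneg c)]
      rw [habs, Real.mul_rpow (pow_nonneg (abs_nonneg c) d) (hfnn x)]
      congr 1
      exact Real.pow_rpow_inv_natCast (abs_nonneg c) hd0.ne'
    have hG5 : ∀ x y : Fin n → ℝ,
        f (x + y) ^ ((d:ℝ)⁻¹) ≤ f x ^ ((d:ℝ)⁻¹) + f y ^ ((d:ℝ)⁻¹) := by
      intro x y
      rcases eq_or_ne x 0 with hx | hx
      · simp [hx, hG3]
      rcases eq_or_ne y 0 with hy | hy
      · simp [hy, hG3]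
      set A := f x ^ ((d:ℝ)⁻¹) with hA
      set B := f y ^ ((d:ℝ)⁻¹) with hB
      have hA0 : 0 < A := hG2 x hx
      have hB0 : 0 < B := hG2 y hy
      have hs : 0 < A + B := by linarith
      have hxA : f (A⁻¹ • x) = 1 := by
        rw [hsmul, inv_pow, hA, hG1 x]
        exact inv_mul_cancel₀ (hfpos x hx).ne'
      have hyB : f (B⁻¹ • y) = 1 := by
        rw [hsmul, inv_pow, hB, hG1 y]
        exact inv_mul_cancel₀ (hfpos y hy).ne'
      have key : f ((A + B)⁻¹ • (x + y)) ≤ 1 := by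
        have e1 : A / (A + B) * A⁻¹ = (A + B)⁻¹ := by
          field_simp
        have e2 : B / (A + B) * B⁻¹ = (A + B)⁻¹ := by
          field_simp
        have hcomb : (A + B)⁻¹ • (x + y)
            = (A / (A + B)) • (A⁻¹ • x) + (B / (A + B)) • (B⁻¹ • y) := by
          rw [smul_add, smul_smul, smul_smul, e1, e2]
        have hcv := hsc.convexOn.2 (mem_univ (A⁻¹ • x)) (mem_univ (B⁻¹ • y))
          (div_nonneg hA0.le hs.le) (div_nonneg hB0.le hs.le)
          (by field_simp)
        rw [hcomb]
        calc f ((A / (A + B)) • (A⁻¹ • x) + (B / (A + B)) • (B⁻¹ • y))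
            ≤ (A / (A + B)) * f (A⁻¹ • x) + (B / (A + B)) * f (B⁻¹ • y) := by
              simpa [smul_eq_mul] using hcv
          _ = 1 := by rw [hxA, hyB]; field_simp
      have hxy : f (x + y) = (A + B) ^ d * f ((A + B)⁻¹ • (x + y)) := by
        rw [← hsmul, smul_smul, mul_inv_cancel₀ hs.ne', one_smul]
      rw [hxy, Real.mul_rpow (pow_nonneg hs.le d) (hfnn _),
        Real.pow_rpow_inv_natCast hs.le hd0.ne']
      calc (A + B) * f ((A + B)⁻¹ • (x + y)) ^ ((d:ℝ)⁻¹)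
          ≤ (A + B) * 1 := by
            apply mul_le_mul_of_nonneg_left _ hs.le
            exact Real.rpow_le_one (hfnn _) key (by positivity)
        _ = A + B := mul_one _
    exact ⟨fun x => f x ^ ((d:ℝ)⁻¹), hG1, hG2, hG3, hG4, hG5⟩

/-- For a form `f` of even degree `d`, the `d`-th root of `f` is a norm if and only if
`f` is strictly convex. -/
theorem stmt_3 {n d : ℕ} (hd : Even d) (hd0 : 0 < d)
    (p : MvPolynomial (Fin n) ℝ) (hp : p.IsHomogeneous d) :
    (∃ g : (Fin n → ℝ) → ℝ,
      (∀ x, g x ^ d = MvPolynomial.eval x p) ∧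
      (∀ x, x ≠ 0 → 0 < g x) ∧
      g 0 = 0 ∧
      (∀ (c : ℝ) (x : Fin n → ℝ), g (c • x) = |c| * g x) ∧
      (∀ x y : Fin n → ℝ, g (x + y) ≤ g x + g y)) ↔
    StrictConvexOn ℝ Set.univ (fun x : Fin n → ℝ => MvPolynomial.eval x p) := by
  have hd2 : 2 ≤ d := by
    obtain ⟨k, hk⟩ := hd
    omega
  exact norm_iff_strictConvex_aux hd hd0 hd2 (fun x => MvPolynomial.eval x p)
    (fun c x => eval_smul_homog p hp c x)
    (fun u w => ⟨MvPolynomial.aeval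
      (fun i => Polynomial.C (u i) + Polynomial.C (w i) * Polynomial.X) p,
      fun t => eval_line_poly p u w t⟩)
end

section
/- Let ‖·‖ be any norm on ℝⁿ. For any ε > 0, there exist an even integer d and a convex positive definite form f of degree d such that ‖x‖ ≤ f(x)^{1/d} ≤ (1+ε)‖x‖ for all x ∈ ℝⁿ. -/
/-- A finite sum of convex functions on `univ` is convex. -/
lemma aux_convexOn_sum {ι E : Type*} [AddCommGroup E] [Module ℝ E]
    (t : Finset ι) (F : ι → E → ℝ) (h : ∀ i ∈ t, ConvexOn ℝ Set.univ (F i)) :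
    ConvexOn ℝ Set.univ (fun y => ∑ i ∈ t, F i y) := by
  classical
  induction t using Finset.cons_induction with
  | empty => simpa using convexOn_const (0 : ℝ) convex_univ
  | cons a s ha ih =>
    have h1 : ConvexOn ℝ Set.univ (F a) := h a (Finset.mem_cons_self a s)
    have h2 : ConvexOn ℝ Set.univ (fun y => ∑ i ∈ s, F i y) :=
      ih fun i hi => h i (Finset.mem_cons_of_mem hi)
    have heq : (fun y => ∑ i ∈ Finset.cons a s ha, F i y)
        = fun y => F a y + ∑ i ∈ s, F i y := by
      funext y
      rw [Finset.sum_cons]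
    rw [heq]
    exact h1.add h2

/-- Any norm `N` on `ℝⁿ` can be sandwiched, up to a factor `1 + ε`, by a polynomial norm:
there exist an even integer `d` and a convex positive definite form `f` of degree `d`
with `N x ≤ f(x)^{1/d} ≤ (1+ε) N x` for all `x`. -/
theorem stmt_6 {n : ℕ} (N : (Fin n → ℝ) → ℝ)
    (hN0 : ∀ x : Fin n → ℝ, x ≠ 0 → 0 < N x)
    (hNh : ∀ (c : ℝ) (x : Fin n → ℝ), N (c • x) = |c| * N x)
    (hNt : ∀ x y : Fin n → ℝ, N (x + y) ≤ N x + N y)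
    (ε : ℝ) (hε : 0 < ε) :
    ∃ d : ℕ, Even d ∧ 0 < d ∧
      ∃ p : MvPolynomial (Fin n) ℝ, p.IsHomogeneous d ∧
        ConvexOn ℝ Set.univ (fun x : Fin n → ℝ => MvPolynomial.eval x p) ∧
        (∀ x : Fin n → ℝ, x ≠ 0 → 0 < MvPolynomial.eval x p) ∧
        ∃ g : (Fin n → ℝ) → ℝ,
          (∀ x, g x ^ d = MvPolynomial.eval x p) ∧
          ∀ x : Fin n → ℝ, N x ≤ g x ∧ g x ≤ (1 + ε) * N x := by
  classical
  have hN00 : N 0 = 0 := by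
    have := hNh 0 0
    simpa using this
  have hNneg : ∀ x, N (-x) = N x := by
    intro x
    have := hNh (-1) x
    simpa using this
  have hNnn : ∀ x, 0 ≤ N x := by
    intro x
    rcases eq_or_ne x 0 with rfl | hx
    · simp [hN00]
    · exact (hN0 x hx).le
  rcases Nat.eq_zero_or_pos n with hn | hn
  · -- trivial case `n = 0`
    subst hn
    have hx0 : ∀ x : Fin 0 → ℝ, x = 0 := fun x => Subsingleton.elim x 0
    refine ⟨2, even_two, two_pos, 0, MvPolynomial.isHomogeneous_zero _ _ _, ?_,
      fun x hx => absurd (hx0 x) hx, fun _ => 0, by simp, ?_⟩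
    · simpa using convexOn_const (0 : ℝ) convex_univ
    · intro x
      rw [hx0 x, hN00]
      norm_num
  -- main case
  haveI : Nonempty (Fin n) := Fin.pos_iff_nonempty.mp hn
  -- N is Lipschitz, hence continuous
  set C : ℝ := ∑ i, N (Pi.single i 1) with hC
  have hNsum : ∀ (s : Finset (Fin n)) (f : Fin n → (Fin n → ℝ)),
      N (∑ i ∈ s, f i) ≤ ∑ i ∈ s, N (f i) := by
    intro s f
    induction s using Finset.cons_induction with
    | empty => simp [hN00]
    | cons a s ha ih =>
      rw [Finset.sum_cons, Finset.sum_cons]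
      exact (hNt _ _).trans (by linarith)
  have hNle : ∀ x, N x ≤ C * ‖x‖ := by
    intro x
    have hx : x = ∑ i, x i • (Pi.single i 1 : Fin n → ℝ) := by
      funext j
      simp [Finset.sum_apply, Pi.single_apply]
    calc N x = N (∑ i, x i • (Pi.single i 1 : Fin n → ℝ)) := by rw [← hx]
      _ ≤ ∑ i, N (x i • (Pi.single i 1 : Fin n → ℝ)) := hNsum _ _
      _ = ∑ i, |x i| * N (Pi.single i 1) := by simp [hNh]
      _ ≤ ∑ i, ‖x‖ * N (Pi.single i 1) := by
          refine Finset.sum_le_sum fun i _ => mul_le_mul_of_nonneg_right ?_ (hNnn _)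
          simpa [Real.norm_eq_abs] using norm_le_pi_norm x i
      _ = C * ‖x‖ := by rw [← Finset.mul_sum, mul_comm]
  have hNcont : Continuous N := by
    have hlip : LipschitzWith (Real.toNNReal C) N := by
      apply LipschitzWith.of_dist_le_mul
      intro x y
      rw [Real.dist_eq, dist_eq_norm]
      have h1 : N x - N y ≤ N (x - y) := by
        have := hNt (x - y) y
        rw [sub_add_cancel] at this
        linarith
      have h2 : N y - N x ≤ N (x - y) := by
        have := hNt (y - x) x
        rw [sub_add_cancel] at this
        have hnx : N (y - x) = N (x - y) := by
          rw [show y - x = -(x - y) by ring, hNneg]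
        linarith [this, hnx.symm.le]
      have habs : |N x - N y| ≤ N (x - y) := abs_le.2 ⟨by linarith, h1⟩
      exact habs.trans ((hNle _).trans
        (mul_le_mul_of_nonneg_right (Real.le_coe_toNNReal C) (norm_nonneg _)))
    exact hlip.continuous
  -- lower bound `c * ‖x‖ ≤ N x`
  have hsph : (Metric.sphere (0 : Fin n → ℝ) 1).Nonempty :=
    NormedSpace.sphere_nonempty.mpr zero_le_one
  obtain ⟨z, hz, hzmin⟩ :=
    (isCompact_sphere (0 : Fin n → ℝ) 1).exists_isMinOn hsph hNcont.continuousOn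
  have hznorm : ‖z‖ = 1 := by simpa using hz
  have hz0 : z ≠ 0 := by
    intro h
    rw [h] at hznorm
    simp at hznorm
  have hcpos : 0 < N z := hN0 z hz0
  have hclow : ∀ x : Fin n → ℝ, N z * ‖x‖ ≤ N x := by
    intro x
    rcases eq_or_ne x 0 with rfl | hx
    · simp [hN00]
    · have hxn : ‖x‖ ≠ 0 := norm_ne_zero_iff.2 hx
      have hxpos : (0:ℝ) < ‖x‖ := lt_of_le_of_ne (norm_nonneg x) (Ne.symm hxn)
      have hmem : ‖x‖⁻¹ • x ∈ Metric.sphere (0 : Fin n → ℝ) 1 := by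
        simp [norm_smul, abs_of_nonneg (inv_nonneg.2 (norm_nonneg x)),
          inv_mul_cancel₀ hxn]
      have hle : N z ≤ N (‖x‖⁻¹ • x) := hzmin hmem
      rw [hNh, abs_of_nonneg (inv_nonneg.2 (norm_nonneg x))] at hle
      calc N z * ‖x‖ ≤ (‖x‖⁻¹ * N x) * ‖x‖ := mul_le_mul_of_nonneg_right hle hxpos.le
        _ = N x := by field_simp
  -- the unit sphere of N is compact
  have hScompact : IsCompact {x : Fin n → ℝ | N x = 1} := by
    have hclosed : IsClosed {x : Fin n → ℝ | N x = 1} := isClosed_eq hNcont continuous_const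
    refine (isCompact_closedBall (0 : Fin n → ℝ) (N z)⁻¹).of_isClosed_subset hclosed ?_
    intro x hx
    have : N z * ‖x‖ ≤ 1 := by
      have := hclow x
      rw [Set.mem_setOf_eq.mp hx] at this
      exact this
    have hxle : ‖x‖ ≤ (N z)⁻¹ := by
      rw [inv_eq_one_div, le_div_iff₀ hcpos]
      calc ‖x‖ * N z = N z * ‖x‖ := mul_comm _ _
        _ ≤ 1 := this
    simpa [Metric.mem_closedBall, dist_zero_right] using hxle
  -- Hahn–Banach: supporting functionals
  have hHB : ∀ x : Fin n → ℝ, ∃ φ : (Fin n → ℝ) →ₗ[ℝ] ℝ,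
      (∀ y, φ y ≤ N y) ∧ (N x = 1 → φ x = 1) := by
    intro x
    by_cases hx : N x = 1
    · have hx0 : x ≠ 0 := by
        intro h
        rw [h, hN00] at hx
        norm_num at hx
      have hf : ∀ y : (LinearPMap.mkSpanSingleton (K := ℝ) (σ := RingHom.id ℝ) x (1:ℝ) hx0).domain,
          (LinearPMap.mkSpanSingleton (K := ℝ) (σ := RingHom.id ℝ) x (1:ℝ) hx0) y ≤ N y := by
        rintro ⟨y, hy⟩
        rcases Submodule.mem_span_singleton.1 hy with ⟨a, rfl⟩
        have h1 : (LinearPMap.mkSpanSingleton (K := ℝ) (σ := RingHom.id ℝ) x (1:ℝ) hx0) ⟨a • x, hy⟩ = a • (1:ℝ) :=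
          LinearPMap.mkSpanSingleton'_apply x (1:ℝ) _ a hy
        rw [h1, smul_eq_mul, mul_one, hNh, hx, mul_one]
        exact le_abs_self a
      obtain ⟨g, hg1, hg2⟩ := exists_extension_of_le_sublinear
        (LinearPMap.mkSpanSingleton (K := ℝ) (σ := RingHom.id ℝ) x (1:ℝ) hx0) N
        (fun c hc y => by rw [hNh, abs_of_pos hc]) hNt hf
      refine ⟨g, hg2, fun _ => ?_⟩
      have h2 := hg1 ⟨x, Submodule.mem_span_singleton_self x⟩
      rwa [LinearPMap.mkSpanSingleton_apply] at h2
    · exact ⟨0, fun y => by simpa using hNnn y, fun h => absurd h hx⟩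
  choose φ hφle hφ1 using hHB
  have hφabs : ∀ x y, |φ x y| ≤ N y := by
    intro x y
    refine abs_le.2 ⟨?_, hφle x y⟩
    have := hφle x (-y)
    rw [map_neg, hNneg] at this
    linarith
  -- δ and the finite subcover
  set δ : ℝ := ε / 2 with hδdef
  have hδ : 0 < δ := by positivity
  set U : (Fin n → ℝ) → Set (Fin n → ℝ) := fun x => {y | N y < (1 + δ) * φ x y} with hU
  have hUopen : ∀ x, IsOpen (U x) := fun x =>
    isOpen_lt hNcont (continuous_const.mul (φ x).continuous_of_finiteDimensional)
  have hcov : {x : Fin n → ℝ | N x = 1} ⊆ ⋃ x, U x := by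
    intro y hy
    refine Set.mem_iUnion.2 ⟨y, ?_⟩
    have hy1 : N y = 1 := hy
    simp only [hU, Set.mem_setOf_eq]
    rw [hy1, hφ1 y hy1]
    linarith
  obtain ⟨t, ht⟩ := hScompact.elim_finite_subcover U hUopen hcov
  -- choose the even degree d
  set r : ℝ := (1 + ε) / (1 + δ) with hr
  have hr1 : 1 < r := by
    rw [hr, lt_div_iff₀ (by linarith)]
    rw [hδdef]
    linarith
  obtain ⟨k, hk⟩ := pow_unbounded_of_one_lt (t.card : ℝ) hr1
  set d : ℕ := 2 * k + 2 with hd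
  have hd_even : Even d := ⟨k + 1, by omega⟩
  have hd0 : 0 < d := by omega
  have hmd : (t.card : ℝ) ≤ r ^ d := by
    refine hk.le.trans (pow_le_pow_right₀ hr1.le (by omega))
  -- the polynomial
  set L : (Fin n → ℝ) → MvPolynomial (Fin n) ℝ := fun x =>
    ∑ i, MvPolynomial.C ((1 + δ) * φ x (Pi.single i 1)) * MvPolynomial.X i with hL
  set p : MvPolynomial (Fin n) ℝ := ∑ x ∈ t, (L x) ^ d with hp
  have hLeval : ∀ x y, MvPolynomial.eval y (L x) = (1 + δ) * φ x y := by
    intro x y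
    have hpi := LinearMap.pi_apply_eq_sum_univ (φ x) y
    have hsingle : ∀ i : Fin n, (fun j => if i = j then (1:ℝ) else 0) = Pi.single i 1 := by
      intro i
      funext j
      simp [Pi.single_apply, eq_comm]
    calc MvPolynomial.eval y (L x)
        = ∑ i, (1 + δ) * φ x (Pi.single i 1) * y i := by
          simp [hL]
      _ = (1 + δ) * ∑ i, y i • φ x (Pi.single i 1) := by
          rw [Finset.mul_sum]
          exact Finset.sum_congr rfl fun i _ => by simp [smul_eq_mul]; ring
      _ = (1 + δ) * φ x y := by
          congr 1
          rw [hpi]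
          exact Finset.sum_congr rfl fun i _ => by rw [hsingle i]
  have hpeval : ∀ y, MvPolynomial.eval y p = ∑ x ∈ t, ((1 + δ) * φ x y) ^ d := by
    intro y
    simp [hp, hLeval]
  have hphom : p.IsHomogeneous d := by
    refine MvPolynomial.IsHomogeneous.sum _ _ _ fun x _ => ?_
    have h1 : (L x).IsHomogeneous 1 := by
      refine MvPolynomial.IsHomogeneous.sum _ _ _ fun i _ => ?_
      exact MvPolynomial.isHomogeneous_C_mul_X _ _
    simpa using h1.pow d
  have hconv : ConvexOn ℝ Set.univ fun y : Fin n → ℝ => MvPolynomial.eval y p := by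
    have heq : (fun y : Fin n → ℝ => MvPolynomial.eval y p)
        = fun y => ∑ x ∈ t, ((1 + δ) * φ x y) ^ d := funext hpeval
    rw [heq]
    refine aux_convexOn_sum t _ fun x _ => ?_
    have h1 : ConvexOn ℝ Set.univ fun z : ℝ => z ^ d := hd_even.convexOn_pow
    have h2 := h1.comp_linearMap ((1 + δ) • φ x)
    simpa [Function.comp_def] using h2
  -- lower bound (N y)^d ≤ p(y)
  have hfnn : ∀ y, 0 ≤ MvPolynomial.eval y p := by
    intro y
    rw [hpeval]
    exact Finset.sum_nonneg fun x _ => hd_even.pow_nonneg _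
  have hlow : ∀ y, (N y) ^ d ≤ MvPolynomial.eval y p := by
    intro y
    rcases eq_or_ne y 0 with rfl | hy
    · rw [hN00, zero_pow hd0.ne']
      exact hfnn 0
    · have hNy : 0 < N y := hN0 y hy
      set w : Fin n → ℝ := (N y)⁻¹ • y with hw
      have hwS : N w = 1 := by
        rw [hw, hNh, abs_of_pos (inv_pos.2 hNy), inv_mul_cancel₀ hNy.ne']
      obtain ⟨x, hxt, hxU⟩ := Set.mem_iUnion₂.1 (ht hwS)
      have hxU' : N w < (1 + δ) * φ x w := hxU
      rw [hwS] at hxU'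
      have hyw : y = N y • w := by
        rw [hw, smul_smul, mul_inv_cancel₀ hNy.ne', one_smul]
      have hφw : φ x y = N y * φ x w := by
        conv_lhs => rw [hyw]
        simp [smul_eq_mul]
      have key : N y ≤ (1 + δ) * φ x y := by
        rw [hφw]
        nlinarith [hxU', hNy]
      have hterm : (N y) ^ d ≤ ((1 + δ) * φ x y) ^ d := pow_le_pow_left₀ (hNnn y) key d
      calc (N y) ^ d ≤ ((1 + δ) * φ x y) ^ d := hterm
        _ ≤ ∑ x' ∈ t, ((1 + δ) * φ x' y) ^ d :=
            Finset.single_le_sum (f := fun x' => ((1 + δ) * φ x' y) ^ d)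
              (fun x' _ => hd_even.pow_nonneg _) hxt
        _ = MvPolynomial.eval y p := (hpeval y).symm
  -- upper bound p(y) ≤ ((1+ε) N y)^d
  have hup : ∀ y, MvPolynomial.eval y p ≤ ((1 + ε) * N y) ^ d := by
    intro y
    rw [hpeval]
    have hterm : ∀ x ∈ t, ((1 + δ) * φ x y) ^ d ≤ ((1 + δ) * N y) ^ d := by
      intro x _
      calc ((1 + δ) * φ x y) ^ d = |(1 + δ) * φ x y| ^ d := (hd_even.pow_abs _).symm
        _ ≤ ((1 + δ) * N y) ^ d := by
            refine pow_le_pow_left₀ (abs_nonneg _) ?_ d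
            rw [abs_mul, abs_of_pos (by linarith : (0:ℝ) < 1 + δ)]
            exact mul_le_mul_of_nonneg_left (hφabs x y) (by linarith)
    calc ∑ x ∈ t, ((1 + δ) * φ x y) ^ d
        ≤ t.card • ((1 + δ) * N y) ^ d := Finset.sum_le_card_nsmul t _ _ hterm
      _ = (t.card : ℝ) * ((1 + δ) * N y) ^ d := by rw [nsmul_eq_mul]
      _ ≤ r ^ d * ((1 + δ) * N y) ^ d := by
          refine mul_le_mul_of_nonneg_right hmd ?_
          have : 0 ≤ (1 + δ) * N y := mul_nonneg (by linarith) (hNnn y)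
          positivity
      _ = ((1 + ε) * N y) ^ d := by
          rw [← mul_pow]
          congr 1
          rw [hr]
          field_simp
  -- assemble
  refine ⟨d, hd_even, hd0, p, hphom, hconv, ?_, fun y => (MvPolynomial.eval y p) ^ ((d:ℝ)⁻¹),
    fun y => Real.rpow_inv_natCast_pow (hfnn y) hd0.ne', fun y => ⟨?_, ?_⟩⟩
  · intro x hx
    exact lt_of_lt_of_le (pow_pos (hN0 x hx) d) (hlow x)
  · have h1 := Real.rpow_le_rpow (pow_nonneg (hNnn y) d) (hlow y)
      (inv_nonneg.2 (Nat.cast_nonneg d))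
    rwa [Real.pow_rpow_inv_natCast (hNnn y) hd0.ne'] at h1
  · have h1 := Real.rpow_le_rpow (hfnn y) (hup y) (inv_nonneg.2 (Nat.cast_nonneg d))
    rwa [Real.pow_rpow_inv_natCast (mul_nonneg (by linarith) (hNnn y)) hd0.ne'] at h1
end

section
/- Let ‖·‖ be any norm on ℝⁿ. For any ε > 0, there exist an even integer d and a convex positive definite form f of degree d such that max over the unit sphere of |f(x)^{1/d} − ‖x‖| is at most ε. -/
/-- Any norm `N` on `ℝⁿ` can be approximated uniformly on the unit sphere by a polynomial
norm: for any `ε > 0` there exist an even integer `d` and a convex positive definite form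
`f` of degree `d` with `|f(x)^{1/d} − N x| ≤ ε` for every `x` on the Euclidean unit sphere. -/
theorem stmt_7 {n : ℕ} (N : (Fin n → ℝ) → ℝ)
    (hN0 : ∀ x : Fin n → ℝ, x ≠ 0 → 0 < N x)
    (hNh : ∀ (c : ℝ) (x : Fin n → ℝ), N (c • x) = |c| * N x)
    (hNt : ∀ x y : Fin n → ℝ, N (x + y) ≤ N x + N y)
    (ε : ℝ) (hε : 0 < ε) :
    ∃ d : ℕ, Even d ∧ 0 < d ∧
      ∃ p : MvPolynomial (Fin n) ℝ, p.IsHomogeneous d ∧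
        ConvexOn ℝ Set.univ (fun x : Fin n → ℝ => MvPolynomial.eval x p) ∧
        (∀ x : Fin n → ℝ, x ≠ 0 → 0 < MvPolynomial.eval x p) ∧
        ∃ g : (Fin n → ℝ) → ℝ,
          (∀ x, g x ^ d = MvPolynomial.eval x p) ∧
          (∀ x, 0 ≤ g x) ∧
          ∀ x : Fin n → ℝ, (∑ i, x i ^ 2) = 1 → |g x - N x| ≤ ε := by
  classical
  have hN0' : N 0 = 0 := by
    have h := hNh 0 0
    simpa using h
  have hNnn : ∀ x, 0 ≤ N x := by
    intro x
    rcases eq_or_ne x 0 with rfl | hx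
    · simp [hN0']
    · exact (hN0 x hx).le
  have hNneg : ∀ v : Fin n → ℝ, N (-v) = N v := by
    intro v
    have h := hNh (-1) v
    rw [neg_one_smul] at h
    simpa using h
  rcases Nat.eq_zero_or_pos n with hn | hn
  · -- trivial case n = 0
    refine ⟨2, even_two, two_pos, 0, MvPolynomial.isHomogeneous_zero _ _ _, ?_, ?_,
      fun _ => 0, ?_, fun _ => le_rfl, ?_⟩
    · simpa using convexOn_const (0:ℝ) convex_univ
    · intro x hx
      exfalso
      apply hx
      funext i
      exact absurd i.isLt (by omega)
    · intro x; simp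
    · intro x hx
      exfalso
      have : (∑ i : Fin n, x i ^ 2) = 0 := by
        subst hn; simp
      rw [this] at hx; norm_num at hx
  -- main case
  set e : Fin n → (Fin n → ℝ) := fun i => Pi.single i (1:ℝ) with he
  have hrep : ∀ x : Fin n → ℝ, x = ∑ i, x i • e i := by
    intro x
    rw [← Finset.univ_sum_single x]
    refine Finset.sum_congr rfl fun i _ => ?_
    funext j
    simp [he, Pi.single_apply]
  have hlin : ∀ (f : (Fin n → ℝ) →L[ℝ] ℝ) (x : Fin n → ℝ), f x = ∑ i, f (e i) * x i := by
    intro f x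
    conv_lhs => rw [hrep x]
    rw [map_sum]
    exact Finset.sum_congr rfl fun i _ => by rw [map_smul]; simp [mul_comm]
  have subadd : ∀ (s : Finset (Fin n)) (f : Fin n → Fin n → ℝ),
      N (∑ i ∈ s, f i) ≤ ∑ i ∈ s, N (f i) := by
    intro s f
    induction s using Finset.cons_induction with
    | empty => simp [hN0']
    | cons a s ha ih =>
      rw [Finset.sum_cons, Finset.sum_cons]
      exact (hNt _ _).trans (by linarith)
  set C : ℝ := ∑ i, N (e i) with hCdef
  have hC : 0 < C := by
    refine Finset.sum_pos (fun i _ => hN0 _ ?_) ⟨⟨0, hn⟩, Finset.mem_univ _⟩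
    intro h
    have := congrFun h i
    simp [he] at this
  have hNle : ∀ x : Fin n → ℝ, N x ≤ C * ‖x‖ := by
    intro x
    calc N x = N (∑ i, x i • e i) := by rw [← hrep x]
    _ ≤ ∑ i, N (x i • e i) := subadd Finset.univ _
    _ = ∑ i, |x i| * N (e i) := Finset.sum_congr rfl fun i _ => hNh _ _
    _ ≤ ∑ i, ‖x‖ * N (e i) := by
        refine Finset.sum_le_sum fun i _ => mul_le_mul_of_nonneg_right ?_ (hNnn _)
        simpa using norm_le_pi_norm x i
    _ = C * ‖x‖ := by rw [← Finset.mul_sum, hCdef]; ring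
  have hLipN : ∀ a b : Fin n → ℝ, |N a - N b| ≤ C * ‖a - b‖ := by
    intro a b
    have h1 : N a ≤ N (a - b) + N b := by
      have h := hNt (a - b) b
      rwa [sub_add_cancel] at h
    have h2 : N b ≤ N (a - b) + N a := by
      have h := hNt (b - a) a
      rw [sub_add_cancel] at h
      rwa [show b - a = -(a - b) by abel, hNneg] at h
    have h3 : N (a - b) ≤ C * ‖a - b‖ := hNle _
    rw [abs_sub_le_iff]
    constructor <;> linarith
  have hNcont : Continuous N := by
    have hl : LipschitzWith (Real.toNNReal C) N := by
      refine LipschitzWith.of_dist_le_mul fun x y => ?_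
      rw [Real.dist_eq, dist_eq_norm, Real.coe_toNNReal C hC.le]
      exact hLipN x y
    exact hl.continuous
  -- supporting functionals
  have hsupport : ∀ y : Fin n → ℝ, y ≠ 0 → ∃ ℓ : (Fin n → ℝ) →L[ℝ] ℝ,
      ℓ y = N y ∧ ∀ x, |ℓ x| ≤ N x := by
    intro y hy
    have hopen : IsOpen {x : Fin n → ℝ | N x < N y} := isOpen_lt hNcont continuous_const
    have hconv : Convex ℝ {x : Fin n → ℝ | N x < N y} := by
      intro v hv w hw ta tb hta htb htab
      simp only [Set.mem_setOf_eq] at hv hw ⊢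
      have h1 : N (ta • v + tb • w) ≤ ta * N v + tb * N w := by
        calc N (ta • v + tb • w) ≤ N (ta • v) + N (tb • w) := hNt _ _
        _ = ta * N v + tb * N w := by
            rw [hNh, hNh, abs_of_nonneg hta, abs_of_nonneg htb]
      rcases eq_or_lt_of_le hta with h0 | h0
      · have htb1 : tb = 1 := by linarith
        rw [← h0, htb1, zero_smul, zero_add, one_smul]
        exact hw
      · have e1 : ta * N v < ta * N y := mul_lt_mul_of_pos_left hv h0
        have e2 : tb * N w ≤ tb * N y := mul_le_mul_of_nonneg_left hw.le htb
        have e3 : ta * N y + tb * N y = N y := by rw [← add_mul, htab, one_mul]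
        linarith
    obtain ⟨f, hf⟩ := geometric_hahn_banach_open_point hconv hopen
      (by simp : y ∉ {x : Fin n → ℝ | N x < N y})
    have h0s : (0 : Fin n → ℝ) ∈ {x : Fin n → ℝ | N x < N y} := by
      simpa [hN0'] using hN0 y hy
    have hfy : 0 < f y := by
      have h := hf 0 h0s
      simpa using h
    have key : ∀ x, N y * f x ≤ f y * N x := by
      intro x
      by_contra hcon
      push_neg at hcon
      have hfx : 0 < f x := by
        have h1 : 0 < N y * f x := lt_of_le_of_lt (mul_nonneg hfy.le (hNnn x)) hcon
        rcases mul_pos_iff.mp h1 with ⟨_, h⟩ | ⟨h, _⟩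
        · exact h
        · exact absurd (hN0 y hy) (by linarith)
      have hcpos : 0 < f y / f x := div_pos hfy hfx
      have hmem : (f y / f x) • x ∈ {x : Fin n → ℝ | N x < N y} := by
        simp only [Set.mem_setOf_eq]
        rw [hNh, abs_of_pos hcpos, div_mul_eq_mul_div, div_lt_iff₀ hfx]
        linarith
      have h := hf _ hmem
      rw [map_smul, smul_eq_mul, div_mul_cancel₀ _ hfx.ne'] at h
      exact lt_irrefl _ h
    refine ⟨(N y / f y) • f, ?_, ?_⟩
    · rw [ContinuousLinearMap.smul_apply, smul_eq_mul, div_mul_cancel₀ _ hfy.ne']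
    · intro x
      have h1 : ((N y / f y) • f) x = (N y * f x) / f y := by
        rw [ContinuousLinearMap.smul_apply, smul_eq_mul]; ring
      have h2 : N y * f (-x) ≤ f y * N x := by
        have := key (-x)
        rwa [hNneg] at this
      rw [map_neg] at h2
      rw [h1, abs_le]
      constructor
      · rw [le_div_iff₀ hfy]
        linarith
      · rw [div_le_iff₀ hfy]
        linarith [key x]
  -- compact sphere, finite net
  set S : Set (Fin n → ℝ) := {x | (∑ i, x i ^ 2) = 1} with hSdef
  have hSne0 : ∀ x : Fin n → ℝ, x ∈ S → x ≠ 0 := by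
    intro x hx h0
    rw [hSdef, Set.mem_setOf_eq, h0] at hx
    simp at hx
  have hS1 : ∀ x : Fin n → ℝ, x ∈ S → ‖x‖ ≤ 1 := by
    intro x hx
    rw [pi_norm_le_iff_of_nonneg zero_le_one]
    intro i
    rw [Real.norm_eq_abs, ← sq_le_one_iff_abs_le_one]
    calc x i ^ 2 ≤ ∑ j, x j ^ 2 :=
      Finset.single_le_sum (f := fun j => x j ^ 2) (fun j _ => sq_nonneg _) (Finset.mem_univ i)
    _ = 1 := hx
  have hScl : IsClosed S := by
    have hcont : Continuous fun x : Fin n → ℝ => ∑ i, x i ^ 2 :=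
      continuous_finset_sum _ fun i _ => (continuous_apply i).pow 2
    exact isClosed_eq hcont continuous_const
  have hScomp : IsCompact S := by
    refine Metric.isCompact_of_isClosed_isBounded hScl ?_
    refine (Metric.isBounded_closedBall (x := (0 : Fin n → ℝ)) (r := 1)).subset ?_
    intro x hx
    exact mem_closedBall_zero_iff.mpr (hS1 x hx)
  have hSne : S.Nonempty := by
    refine ⟨e ⟨0, hn⟩, ?_⟩
    rw [hSdef, Set.mem_setOf_eq]
    simp [he, Pi.single_apply]
  obtain ⟨z, hzS, hz⟩ := hScomp.exists_isMinOn hSne hNcont.continuousOn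
  have hzmin : ∀ x ∈ S, N z ≤ N x := fun x hx => hz hx
  have hNz : 0 < N z := hN0 z (hSne0 z hzS)
  set δ : ℝ := min (ε / (4 * C)) (N z / (4 * C)) with hδdef
  have hδpos : 0 < δ := lt_min (by positivity) (by positivity)
  have hCδε : C * δ ≤ ε / 4 := by
    have h := min_le_left (ε / (4 * C)) (N z / (4 * C))
    calc C * δ ≤ C * (ε / (4 * C)) := mul_le_mul_of_nonneg_left h hC.le
    _ = ε / 4 := by field_simp
  have hCδz : C * δ ≤ N z / 4 := by
    have h := min_le_right (ε / (4 * C)) (N z / (4 * C))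
    calc C * δ ≤ C * (N z / (4 * C)) := mul_le_mul_of_nonneg_left h hC.le
    _ = N z / 4 := by field_simp
  obtain ⟨T, hTS, hTcov⟩ := hScomp.elim_nhds_subcover (fun y => Metric.ball y δ)
    (fun y _ => Metric.ball_mem_nhds y hδpos)
  -- functionals for each center
  have hell : ∀ y : Fin n → ℝ, ∃ ℓ : (Fin n → ℝ) →L[ℝ] ℝ,
      (y ≠ 0 → ℓ y = N y) ∧ ∀ x, |ℓ x| ≤ N x := by
    intro y
    rcases eq_or_ne y 0 with rfl | hy
    · exact ⟨0, fun h => absurd rfl h, fun x => by simpa using hNnn x⟩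
    · obtain ⟨ℓ, h1, h2⟩ := hsupport y hy
      exact ⟨ℓ, fun _ => h1, h2⟩
  choose ℓ hℓ1 hℓ2 using hell
  have hTne : T.Nonempty := by
    obtain ⟨x0, hx0⟩ := hSne
    obtain ⟨y, hy⟩ := Set.mem_iUnion₂.mp (hTcov hx0)
    exact ⟨y, hy.1⟩
  set m : ℕ := T.card with hmdef
  have hm1 : (1:ℝ) ≤ (m:ℝ) := by
    exact_mod_cast Nat.one_le_iff_ne_zero.mpr (Finset.card_ne_zero_of_mem hTne.choose_spec)
  -- choose degree d
  set aε : ℝ := ε / (2 * C) with haεdef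
  have haε : 0 < aε := by positivity
  obtain ⟨k, hk⟩ := pow_unbounded_of_one_lt (m:ℝ) (by linarith : (1:ℝ) < 1 + aε)
  set d : ℕ := 2 * k + 2 with hddef
  have hdeven : Even d := ⟨k + 1, by omega⟩
  have hd0 : 0 < d := by omega
  have hdne : (d:ℝ) ≠ 0 := Nat.cast_ne_zero.mpr (by omega)
  have hd2 : (m:ℝ) ≤ (1 + aε) ^ d := by
    refine hk.le.trans (pow_le_pow_right₀ (by linarith) (by omega))
  -- the polynomial
  set p : MvPolynomial (Fin n) ℝ :=
    ∑ y ∈ T, (∑ i, MvPolynomial.C ((ℓ y) (e i)) * MvPolynomial.X i) ^ d with hp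
  have hpeval : ∀ x : Fin n → ℝ, MvPolynomial.eval x p = ∑ y ∈ T, (ℓ y x) ^ d := by
    intro x
    rw [hp, map_sum]
    refine Finset.sum_congr rfl fun y _ => ?_
    rw [map_pow]
    congr 1
    rw [map_sum, hlin (ℓ y) x]
    refine Finset.sum_congr rfl fun i _ => ?_
    simp
  have hphom : p.IsHomogeneous d := by
    rw [hp]
    refine MvPolynomial.IsHomogeneous.sum _ _ _ fun y _ => ?_
    have h1 : (∑ i, MvPolynomial.C ((ℓ y) (e i)) * MvPolynomial.X i).IsHomogeneous 1 :=
      MvPolynomial.IsHomogeneous.sum _ _ _ fun i _ => MvPolynomial.isHomogeneous_C_mul_X _ _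
    simpa using h1.pow d
  have hconvp : ConvexOn ℝ Set.univ fun x : Fin n → ℝ => MvPolynomial.eval x p := by
    have h1 : (fun x : Fin n → ℝ => MvPolynomial.eval x p)
        = fun x => ∑ y ∈ T, (ℓ y x) ^ d := funext hpeval
    rw [h1]
    have h2 : ∀ s : Finset (Fin n → ℝ), ConvexOn ℝ Set.univ fun x => ∑ y ∈ s, (ℓ y x) ^ d := by
      intro s
      induction s using Finset.cons_induction with
      | empty => simpa using convexOn_const (0:ℝ) convex_univ
      | cons a s ha ih =>
        simp only [Finset.sum_cons]
        have hterm : ConvexOn ℝ Set.univ fun x : Fin n → ℝ => (ℓ a x) ^ d := by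
          have h3 := (Even.convexOn_pow (𝕜 := ℝ) hdeven).comp_affineMap
            ((ℓ a).toLinearMap.toAffineMap)
          simpa [Function.comp_def] using h3
        exact hterm.add ih
    exact h2 T
  have hevnn : ∀ x : Fin n → ℝ, 0 ≤ MvPolynomial.eval x p := by
    intro x
    rw [hpeval]
    exact Finset.sum_nonneg fun y _ => hdeven.pow_nonneg _
  -- lower bound on sphere
  have hlow : ∀ u : Fin n → ℝ, u ∈ S → ∃ y ∈ T, N u - 2 * (C * δ) ≤ ℓ y u := by
    intro u hu
    obtain ⟨y, hy⟩ := Set.mem_iUnion₂.mp (hTcov hu)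
    obtain ⟨hyT, hyb⟩ := hy
    have hy0 : y ≠ 0 := hSne0 y (hTS y hyT)
    have h1 : ℓ y y = N y := hℓ1 y hy0
    have h2 : |ℓ y (u - y)| ≤ N (u - y) := hℓ2 y _
    have h3 : N (u - y) ≤ C * ‖u - y‖ := hNle _
    have h4 : ‖u - y‖ < δ := by rwa [← dist_eq_norm]
    have h5 : |N u - N y| ≤ C * ‖u - y‖ := hLipN u y
    have h6 : ℓ y u = N y + ℓ y (u - y) := by
      rw [← h1, map_sub]; ring
    have e1 := (abs_le.mp h5).2
    have e2 := (abs_le.mp h2).1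
    have e3 : C * ‖u - y‖ ≤ C * δ := mul_le_mul_of_nonneg_left h4.le hC.le
    exact ⟨y, hyT, by linarith⟩
  -- positivity
  have hpossphere : ∀ u : Fin n → ℝ, u ∈ S → 0 < MvPolynomial.eval u p := by
    intro u hu
    obtain ⟨y, hyT, hylow⟩ := hlow u hu
    have hNu : N z ≤ N u := hzmin u hu
    have hly : 0 < ℓ y u := by linarith
    rw [hpeval]
    have h1 : (ℓ y u) ^ d ≤ ∑ y' ∈ T, (ℓ y' u) ^ d :=
      Finset.single_le_sum (f := fun y' => (ℓ y' u) ^ d)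
        (fun y' _ => hdeven.pow_nonneg _) hyT
    exact lt_of_lt_of_le (pow_pos hly d) h1
  have hpos : ∀ x : Fin n → ℝ, x ≠ 0 → 0 < MvPolynomial.eval x p := by
    intro x hx
    obtain ⟨i, hi⟩ : ∃ i, x i ≠ 0 := by
      by_contra h
      push_neg at h
      exact hx (funext h)
    have hr0 : 0 < ∑ j, x j ^ 2 := by
      refine Finset.sum_pos' (fun j _ => sq_nonneg _) ⟨i, Finset.mem_univ i, ?_⟩
      have := pow_pos (abs_pos.mpr hi) 2
      rwa [sq_abs] at this
    set r : ℝ := Real.sqrt (∑ j, x j ^ 2) with hrdef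
    have hrpos : 0 < r := Real.sqrt_pos.mpr hr0
    set u : Fin n → ℝ := r⁻¹ • x with hu
    have huS : u ∈ S := by
      rw [hSdef, Set.mem_setOf_eq]
      have : ∀ j, u j ^ 2 = r⁻¹ ^ 2 * x j ^ 2 := by
        intro j; rw [hu]; simp [mul_pow]
      rw [Finset.sum_congr rfl fun j _ => this j, ← Finset.mul_sum, inv_pow,
        hrdef, Real.sq_sqrt hr0.le, inv_mul_cancel₀ hr0.ne']
    have hxu : x = r • u := by
      rw [hu, smul_smul, mul_inv_cancel₀ hrpos.ne', one_smul]
    have hterm : ∀ y', ℓ y' x = r * ℓ y' u := by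
      intro y'
      conv_lhs => rw [hxu]
      rw [map_smul, smul_eq_mul]
    have : MvPolynomial.eval x p = r ^ d * MvPolynomial.eval u p := by
      rw [hpeval, hpeval, Finset.mul_sum]
      exact Finset.sum_congr rfl fun y' _ => by rw [hterm y', mul_pow]
    rw [this]
    exact mul_pos (pow_pos hrpos d) (hpossphere u huS)
  -- the root function
  set g : (Fin n → ℝ) → ℝ := fun x => (MvPolynomial.eval x p) ^ ((d:ℝ)⁻¹) with hg
  have hgpow : ∀ x : Fin n → ℝ, g x ^ d = MvPolynomial.eval x p := by
    intro x
    rw [hg, ← Real.rpow_natCast ((MvPolynomial.eval x p) ^ ((d:ℝ)⁻¹)) d,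
      ← Real.rpow_mul (hevnn x), inv_mul_cancel₀ hdne, Real.rpow_one]
  have hgnn : ∀ x : Fin n → ℝ, 0 ≤ g x := fun x => Real.rpow_nonneg (hevnn x) _
  refine ⟨d, hdeven, hd0, p, hphom, hconvp, hpos, g, hgpow, hgnn, ?_⟩
  intro x hx
  have hxS : x ∈ S := hx
  have hNx : 0 < N x := hN0 x (hSne0 x hxS)
  have hNxC : N x ≤ C := by
    have h1 := hNle x
    have h2 := hS1 x hxS
    nlinarith
  -- upper bound
  have hub : MvPolynomial.eval x p ≤ (m:ℝ) * (N x) ^ d := by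
    rw [hpeval]
    calc ∑ y ∈ T, (ℓ y x) ^ d ≤ ∑ _y ∈ T, (N x) ^ d := by
          refine Finset.sum_le_sum fun y _ => ?_
          rw [← hdeven.pow_abs (ℓ y x)]
          exact pow_le_pow_left₀ (abs_nonneg _) (hℓ2 y x) d
    _ = (m:ℝ) * (N x) ^ d := by rw [Finset.sum_const, nsmul_eq_mul, hmdef]
  have hgub : g x ≤ (1 + aε) * N x := by
    have h1 : g x ≤ ((m:ℝ) * (N x) ^ d) ^ ((d:ℝ)⁻¹) :=
      Real.rpow_le_rpow (hevnn x) hub (by positivity)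
    have h2 : ((m:ℝ) * (N x) ^ d) ^ ((d:ℝ)⁻¹) = (m:ℝ) ^ ((d:ℝ)⁻¹) * N x := by
      rw [Real.mul_rpow (Nat.cast_nonneg _) (pow_nonneg hNx.le _)]
      congr 1
      rw [← Real.rpow_natCast (N x) d, ← Real.rpow_mul hNx.le,
        mul_inv_cancel₀ hdne, Real.rpow_one]
    have h3 : (m:ℝ) ^ ((d:ℝ)⁻¹) ≤ 1 + aε := by
      have h4 := Real.rpow_le_rpow (Nat.cast_nonneg _ : (0:ℝ) ≤ (m:ℝ)) hd2
        (by positivity : (0:ℝ) ≤ (d:ℝ)⁻¹)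
      rwa [← Real.rpow_natCast (1 + aε) d, ← Real.rpow_mul (by linarith),
        mul_inv_cancel₀ hdne, Real.rpow_one] at h4
    calc g x ≤ (m:ℝ) ^ ((d:ℝ)⁻¹) * N x := by rw [← h2]; exact h1
    _ ≤ (1 + aε) * N x := mul_le_mul_of_nonneg_right h3 hNx.le
  -- lower bound
  obtain ⟨y, hyT, hylow⟩ := hlow x hxS
  have hlb : (ℓ y x) ^ d ≤ MvPolynomial.eval x p := by
    rw [hpeval]
    exact Finset.single_le_sum (f := fun y' => (ℓ y' x) ^ d)
      (fun y' _ => hdeven.pow_nonneg _) hyT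
  have hglb : |ℓ y x| ≤ g x := by
    have h1 : (|ℓ y x| ^ (d:ℕ)) ^ ((d:ℝ)⁻¹) ≤ g x := by
      refine Real.rpow_le_rpow (by positivity) ?_ (by positivity)
      rw [hdeven.pow_abs]
      exact hlb
    rwa [← Real.rpow_natCast |ℓ y x| d, ← Real.rpow_mul (abs_nonneg _),
      mul_inv_cancel₀ hdne, Real.rpow_one] at h1
  have hglb2 : N x - 2 * (C * δ) ≤ g x :=
    le_trans (le_trans hylow (le_abs_self _)) hglb
  have haC : aε * C = ε / 2 := by
    rw [haεdef]; field_simp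
  rw [abs_sub_le_iff]
  constructor
  · -- g x - N x ≤ ε
    have : g x - N x ≤ aε * N x := by linarith
    have h5 : aε * N x ≤ aε * C := mul_le_mul_of_nonneg_left hNxC haε.le
    linarith
  · -- N x - g x ≤ ε
    linarith
end

section
/- Let g and g' be two convex functions such that f = g - h = g' - h' with h = g - f and h' = g' - f convex, and suppose g - g' is convex. For a point x₀, define f_g(x) = g(x) - h(x₀) - ∇h(x₀)ᵀ(x - x₀) and f_{g'}(x) = g'(x) - h'(x₀) - ∇h'(x₀)ᵀ(x - x₀). Then f_{g'}(x) ≤ f_g(x) for all x. -/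
/-- First-order condition for convex differentiable functions on `ℝⁿ`. -/
lemma convex_first_order {n : ℕ} (c : (Fin n → ℝ) → ℝ)
    (hc : ConvexOn ℝ Set.univ c) (hcd : Differentiable ℝ c)
    (x₀ x : Fin n → ℝ) :
    c x₀ + fderiv ℝ c x₀ (x - x₀) ≤ c x := by
  set v := x - x₀ with hv
  set φ : ℝ → ℝ := fun t => c (x₀ + t • v) with hφ
  have hφA : φ = c ∘ (AffineMap.lineMap x₀ x : ℝ →ᵃ[ℝ] (Fin n → ℝ)) := by
    funext t
    simp [φ, AffineMap.lineMap_apply_module, hv]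
    congr 1
    module
  have hφc : ConvexOn ℝ Set.univ φ := by
    rw [hφA]
    have := hc.comp_affineMap (AffineMap.lineMap x₀ x : ℝ →ᵃ[ℝ] (Fin n → ℝ))
    simpa using this
  have hline : ∀ t : ℝ, HasDerivAt (fun s : ℝ => x₀ + s • v) v t := by
    intro t
    simpa using ((hasDerivAt_id t).smul_const v).const_add x₀
  have hφd : ∀ t : ℝ, HasDerivAt φ (fderiv ℝ c (x₀ + t • v) v) t := by
    intro t
    exact (hcd (x₀ + t • v)).hasFDerivAt.comp_hasDerivAt t (hline t)
  have key : fderiv ℝ c x₀ v ≤ φ 1 - φ 0 := by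
    have := ConvexOn.le_slope_of_hasDerivAt hφc (Set.mem_univ (0:ℝ)) (Set.mem_univ (1:ℝ))
      zero_lt_one (by simpa using hφd 0)
    simpa [slope_def_field] using this
  have hφ0 : φ 0 = c x₀ := by simp [φ]
  have hφ1 : φ 1 = c x := by simp [φ, hv]
  rw [hφ0, hφ1] at key
  linarith

/-- If `g` and `g'` are two dc decompositions of `f` (i.e. `g, g', h := g - f, h' := g' - f`
are convex) and `g'` dominates `g` (i.e. `g - g'` is convex), then the convexified function
obtained from `g'` lower bounds the one obtained from `g` everywhere. -/
theorem stmt_8 {n : ℕ} (f g g' h h' : (Fin n → ℝ) → ℝ)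
    (hgc : ConvexOn ℝ Set.univ g) (hg'c : ConvexOn ℝ Set.univ g')
    (hhc : ConvexOn ℝ Set.univ h) (hh'c : ConvexOn ℝ Set.univ h')
    (hgd : Differentiable ℝ g) (hg'd : Differentiable ℝ g')
    (hhd : Differentiable ℝ h) (hh'd : Differentiable ℝ h')
    (hfd : Differentiable ℝ f)
    (hh : ∀ x, h x = g x - f x) (hh' : ∀ x, h' x = g' x - f x)
    (hdom : ConvexOn ℝ Set.univ fun x => g x - g' x)
    (x₀ : Fin n → ℝ) :
    ∀ x : Fin n → ℝ,
      g' x - (h' x₀ + fderiv ℝ h' x₀ (x - x₀)) ≤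
        g x - (h x₀ + fderiv ℝ h x₀ (x - x₀)) := by
  intro x
  set c : (Fin n → ℝ) → ℝ := fun y => g y - g' y with hcdef
  have hceq : c = fun y => h y - h' y := by
    funext y; simp [hcdef, hh y, hh' y]
  have hcd : Differentiable ℝ c := by rw [hceq]; exact hhd.sub hh'd
  have hcfd : fderiv ℝ c x₀ = fderiv ℝ h x₀ - fderiv ℝ h' x₀ := by
    rw [hceq]; exact fderiv_sub (hhd x₀) (hh'd x₀)
  have key := convex_first_order c hdom hcd x₀ x
  rw [hcfd] at key
  simp only [ContinuousLinearMap.sub_apply] at key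
  have hc0 : c x₀ = h x₀ - h' x₀ := by rw [hceq]
  have hcx : c x = g x - g' x := rfl
  linarith
end

section
/- Let f : ℝⁿ → ℝ be a form of degree d whose Hessian satisfies yᵀH_f(x)y > 0 for all (x,y) on the bisphere S^{n−1} × S^{n−1}. Let f_min := min over the bisphere of yᵀH_f(x)y and set c := f_min / (2d(d−1)). Then g(x) := f(x) − c(Σᵢ xᵢ²)^{d/2} has positive definite Hessian: yᵀH_g(x)y > 0 for all x ≠ 0, y ≠ 0. -/
open MvPolynomial in
lemma aux_hasFDerivAt_eval {n : ℕ} (q : MvPolynomial (Fin n) ℝ) (x : Fin n → ℝ) :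
    HasFDerivAt (fun z : Fin n → ℝ => eval z q)
      (∑ i, eval x (pderiv i q) • ContinuousLinearMap.proj (R := ℝ) (φ := fun _ : Fin n => ℝ) i)
      x := by
  induction q using MvPolynomial.induction_on with
  | C a =>
      simp only [eval_C, pderiv_C, map_zero, zero_smul, Finset.sum_const_zero]
      exact hasFDerivAt_const _ _
  | add p q hp hq =>
      simp only [map_add, add_smul, Finset.sum_add_distrib]
      exact hp.add hq
  | mul_X p i hp =>
      have h2 : HasFDerivAt (fun z : Fin n → ℝ => z i)
          (ContinuousLinearMap.proj (R := ℝ) (φ := fun _ : Fin n => ℝ) i) x :=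
        hasFDerivAt_apply i x
      simp only [eval_mul, eval_X]
      refine HasFDerivAt.congr_fderiv (hp.mul h2) (Eq.symm ?_)
      refine ContinuousLinearMap.ext fun y => ?_
      simp only [ContinuousLinearMap.sum_apply, ContinuousLinearMap.smul_apply,
        ContinuousLinearMap.proj_apply, ContinuousLinearMap.add_apply, smul_eq_mul,
        pderiv_mul, map_add, eval_mul, eval_X, eval_add]
      rw [Finset.sum_congr rfl (fun j _ => show
          ((eval x) ((pderiv j) p) * x i + (eval x) p * (eval x) ((pderiv j) (X i))) * y j =
          eval x (pderiv j p) * x i * y j + eval x p * eval x (pderiv j (X i)) * y j by ring),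
        Finset.sum_add_distrib]
      have hδ : ∀ j : Fin n, eval x (pderiv j (X i)) = if j = i then 1 else 0 := by
        intro j
        classical
        rcases eq_or_ne j i with rfl | hji
        · simp
        · simp [hji]
      rw [add_comm]
      congr 1
      · rw [Finset.sum_congr rfl (fun j _ => by rw [hδ j])]
        simp [Finset.sum_ite_eq]
      · rw [Finset.mul_sum]
        exact Finset.sum_congr rfl fun j _ => by ring

open MvPolynomial in
lemma aux_fderiv_eval {n : ℕ} (q : MvPolynomial (Fin n) ℝ) (x y : Fin n → ℝ) :
    fderiv ℝ (fun z : Fin n → ℝ => eval z q) x y = ∑ i, eval x (pderiv i q) * y i := by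
  rw [(aux_hasFDerivAt_eval q x).fderiv]
  simp [smul_eq_mul]

open MvPolynomial in
lemma aux_snd_eval {n : ℕ} (q : MvPolynomial (Fin n) ℝ) (x y : Fin n → ℝ) :
    fderiv ℝ (fun z => fderiv ℝ (fun w : Fin n → ℝ => eval w q) z y) x y
      = ∑ j, ∑ i, y i * y j * eval x (pderiv j (pderiv i q)) := by
  have h1 : (fun z => fderiv ℝ (fun w : Fin n → ℝ => eval w q) z y)
      = fun z => eval z (∑ i, MvPolynomial.C (y i) * pderiv i q) := by
    funext z
    rw [aux_fderiv_eval]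
    simp only [map_sum, eval_mul, eval_C]
    exact Finset.sum_congr rfl fun i _ => by ring
  rw [h1, aux_fderiv_eval]
  rw [Finset.sum_congr rfl (fun j (_ : j ∈ Finset.univ) => show
      eval x (pderiv j (∑ i, MvPolynomial.C (y i) * pderiv i q)) * y j
        = ∑ i, y i * y j * eval x (pderiv j (pderiv i q)) by
    rw [map_sum, map_sum, Finset.sum_mul]
    exact Finset.sum_congr rfl fun i _ => by rw [pderiv_C_mul, eval_mul, eval_C]; ring)]

open MvPolynomial in
lemma aux_eval_smul {n : ℕ} {q : MvPolynomial (Fin n) ℝ} {m : ℕ} (h : q.IsHomogeneous m)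
    (t : ℝ) (x : Fin n → ℝ) : eval (t • x) q = t ^ m * eval x q := by
  rw [eval_eq, eval_eq, Finset.mul_sum]
  refine Finset.sum_congr rfl fun u hu => ?_
  have hdeg : u.degree = m := by
    by_contra hne
    exact (mem_support_iff.mp hu) (h.coeff_eq_zero hne)
  have h2 : ∏ i ∈ u.support, (t • x) i ^ u i
      = (∏ i ∈ u.support, t ^ u i) * ∏ i ∈ u.support, x i ^ u i := by
    rw [← Finset.prod_mul_distrib]
    exact Finset.prod_congr rfl fun i _ => by simp [Pi.smul_apply, smul_eq_mul, mul_pow]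
  rw [h2, Finset.prod_pow_eq_pow_sum]
  have h3 : ∑ i ∈ u.support, u i = m := hdeg
  rw [h3]
  ring

open MvPolynomial in
lemma aux_pderiv_homog {n : ℕ} {q : MvPolynomial (Fin n) ℝ} {m : ℕ} (h : q.IsHomogeneous m)
    (i : Fin n) : (pderiv i q).IsHomogeneous (m - 1) := by
  classical
  rw [q.as_sum, map_sum]
  refine IsHomogeneous.sum _ _ _ fun u hu => ?_
  rw [pderiv_monomial]
  by_cases h0 : u i = 0
  · have hz : (coeff u q) * ((u i : ℕ) : ℝ) = 0 := by rw [h0]; simp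
    rw [hz, map_zero]
    exact isHomogeneous_zero _ _ _
  · refine isHomogeneous_monomial _ ?_
    have hdeg : u.degree = m := by
      by_contra hne
      exact (mem_support_iff.mp hu) (h.coeff_eq_zero hne)
    have hle : Finsupp.single i 1 ≤ u := by
      rw [Finsupp.single_le_iff]
      omega
    have hadd : (u - Finsupp.single i 1) + Finsupp.single i 1 = u :=
      tsub_add_cancel_of_le hle
    have hd1 : (Finsupp.single i 1 : Fin n →₀ ℕ).degree = 1 := by
      simp [Finsupp.degree_apply, Finsupp.support_single_ne_zero]
    have h4 := congrArg Finsupp.degree hadd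
    rw [Finsupp.degree_eq_weight_one] at h4 hd1 hdeg ⊢
    rw [map_add] at h4
    omega

open MvPolynomial in
lemma aux_pderiv_N {n : ℕ} (i : Fin n) :
    pderiv i (∑ l, X l ^ 2 : MvPolynomial (Fin n) ℝ) = C 2 * X i := by
  classical
  rw [map_sum]
  rw [Finset.sum_eq_single i (fun j _ hji => by
        rw [pderiv_pow, pderiv_X_of_ne hji]; ring)
      (fun h => absurd (Finset.mem_univ i) h)]
  rw [pderiv_pow, pderiv_X_self]
  rw [show (2:ℕ) - 1 = 1 by norm_num, pow_one]
  rw [show (C 2 : MvPolynomial (Fin n) ℝ) = 2 from map_ofNat _ 2]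
  push_cast
  ring

open MvPolynomial in
lemma aux_eval_pderiv_X {n : ℕ} (u : Fin n → ℝ) (i j : Fin n) :
    eval u (pderiv j (X i) : MvPolynomial (Fin n) ℝ) = if j = i then 1 else 0 := by
  classical
  rcases eq_or_ne j i with rfl | hji
  · simp
  · simp [hji]

open MvPolynomial in
lemma aux_hess_Npow {n : ℕ} (k : ℕ) (u v : Fin n → ℝ) (hu : (∑ i, u i ^ 2) = 1) :
    ∑ j, ∑ i, v i * v j *
        eval u (pderiv j (pderiv i ((∑ l, X l ^ 2 : MvPolynomial (Fin n) ℝ) ^ k)))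
      = 4 * k * ((k - 1 : ℕ) : ℝ) * (∑ i, u i * v i) ^ 2 + 2 * k * (∑ i, v i ^ 2) := by
  classical
  set N : MvPolynomial (Fin n) ℝ := ∑ l, X l ^ 2 with hNdef
  have hN : ∀ m : ℕ, eval u (N ^ m) = 1 := by
    intro m
    rw [eval_pow]
    have : eval u N = 1 := by
      rw [hNdef, map_sum]
      simpa [eval_pow] using hu
    rw [this, one_pow]
  have hcast : ∀ m : ℕ, ((m : ℕ) : MvPolynomial (Fin n) ℝ) = C ((m : ℝ)) := by
    intro m
    rw [← map_natCast (C : ℝ →+* MvPolynomial (Fin n) ℝ) m]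
  have hpd2 : ∀ i j : Fin n, eval u (pderiv j (pderiv i (N ^ k)))
      = 4 * k * ((k - 1 : ℕ) : ℝ) * u i * u j + (if j = i then 2 * (k : ℝ) else 0) := by
    intro i j
    rw [pderiv_pow, aux_pderiv_N i, hcast k, pderiv_mul, pderiv_C_mul, pderiv_pow,
      aux_pderiv_N j, hcast (k-1), pderiv_C_mul]
    simp only [eval_add, eval_mul, eval_C, eval_X, hN, aux_eval_pderiv_X]
    rcases eq_or_ne j i with rfl | hji
    · simp only [if_pos rfl, if_true]; ring
    · simp only [if_neg hji, mul_zero, add_zero]; ring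
  have hrow : ∀ j : Fin n, ∑ i, v i * v j *
        eval u (pderiv j (pderiv i (N ^ k)))
      = 4 * k * ((k - 1 : ℕ) : ℝ) * (u j * v j) * (∑ i, u i * v i) + 2 * k * v j ^ 2 := by
    intro j
    rw [Finset.sum_congr rfl (fun i _ => by rw [hpd2 i j])]
    rw [Finset.sum_congr rfl (fun i _ => show
        v i * v j * (4 * k * ((k - 1 : ℕ) : ℝ) * u i * u j + (if j = i then 2 * (k:ℝ) else 0))
          = 4 * k * ((k - 1 : ℕ) : ℝ) * (u j * v j) * (u i * v i)
            + (if j = i then 2 * (k:ℝ) * v i * v j else 0) by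
      split_ifs <;> ring)]
    rw [Finset.sum_add_distrib, ← Finset.mul_sum, Finset.sum_ite_eq]
    simp only [Finset.mem_univ, if_true, if_pos]
    ring
  rw [Finset.sum_congr rfl (fun j _ => hrow j), Finset.sum_add_distrib, ← Finset.sum_mul,
    ← Finset.mul_sum, ← Finset.mul_sum]
  rw [Finset.sum_congr rfl (fun j _ => mul_comm (u j) (v j))]
  ring

set_option maxHeartbeats 1000000 in
/-- Let `f` be a form of even degree `d ≥ 2` whose Hessian quadratic form `yᵀH_f(x)y` is
positive on the bisphere, with minimum value `fmin` there. With `c := fmin/(2d(d−1))`, the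
form `g(x) := f(x) − c·(Σᵢ xᵢ²)^{d/2}` has positive definite Hessian:
`yᵀH_g(x)y > 0` for all `x ≠ 0`, `y ≠ 0`. -/
theorem stmt_11 {n d : ℕ} (hd2 : 2 ≤ d) (hde : Even d)
    (p : MvPolynomial (Fin n) ℝ) (hp : p.IsHomogeneous d)
    (f : (Fin n → ℝ) → ℝ) (hf : f = fun x => MvPolynomial.eval x p)
    (hpos : ∀ x y : Fin n → ℝ, (∑ i, x i ^ 2) = 1 → (∑ i, y i ^ 2) = 1 →
      0 < fderiv ℝ (fun z => fderiv ℝ f z y) x y)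
    (fmin : ℝ)
    (hfmin : IsLeast {v : ℝ | ∃ x y : Fin n → ℝ, (∑ i, x i ^ 2) = 1 ∧ (∑ i, y i ^ 2) = 1 ∧
      v = fderiv ℝ (fun z => fderiv ℝ f z y) x y} fmin)
    (g : (Fin n → ℝ) → ℝ)
    (hg : g = fun x => f x - (fmin / (2 * (d : ℝ) * ((d : ℝ) - 1))) * (∑ i, x i ^ 2) ^ (d / 2)) :
    ∀ x : Fin n → ℝ, x ≠ 0 → ∀ y : Fin n → ℝ, y ≠ 0 →
      0 < fderiv ℝ (fun z => fderiv ℝ g z y) x y := by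
  classical
  open MvPolynomial in
  intro x hx y hy
  set k := d / 2 with hk
  have hdvd : 2 ∣ d := hde.two_dvd
  have h2k : 2 * k = d := Nat.mul_div_cancel' hdvd
  have hk1 : 1 ≤ k := by omega
  set N : MvPolynomial (Fin n) ℝ := ∑ l, X l ^ 2 with hNdef
  set c : ℝ := fmin / (2 * (d:ℝ) * ((d:ℝ) - 1)) with hc
  set P : MvPolynomial (Fin n) ℝ := p - C c * N ^ k with hP
  -- g is evaluation of P
  have hgP : g = fun z => eval z P := by
    funext z
    rw [hg, hf, hP]
    simp only [map_sub, eval_mul, eval_C, eval_pow, hNdef, map_sum, eval_X]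
  rw [hgP, aux_snd_eval]
  -- splitting of the Hessian form of P
  have hsplit : ∀ (w z : Fin n → ℝ),
      ∑ j, ∑ i, z i * z j * eval w (pderiv j (pderiv i P))
        = (∑ j, ∑ i, z i * z j * eval w (pderiv j (pderiv i p)))
          - c * ∑ j, ∑ i, z i * z j * eval w (pderiv j (pderiv i (N ^ k))) := by
    intro w z
    rw [Finset.mul_sum, ← Finset.sum_sub_distrib]
    refine Finset.sum_congr rfl fun j _ => ?_
    rw [Finset.mul_sum, ← Finset.sum_sub_distrib]
    refine Finset.sum_congr rfl fun i _ => ?_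
    rw [hP, map_sub, pderiv_C_mul, map_sub, pderiv_C_mul, map_sub, eval_mul, eval_C]
    ring
  -- normalizations
  have hx2 : 0 < ∑ i, x i ^ 2 := by
    obtain ⟨i, hi⟩ := Function.ne_iff.mp hx
    exact Finset.sum_pos' (fun i _ => sq_nonneg _)
      ⟨i, Finset.mem_univ i, lt_of_le_of_ne (sq_nonneg _) (Ne.symm (pow_ne_zero 2 hi))⟩
  have hy2 : 0 < ∑ i, y i ^ 2 := by
    obtain ⟨i, hi⟩ := Function.ne_iff.mp hy
    exact Finset.sum_pos' (fun i _ => sq_nonneg _)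
      ⟨i, Finset.mem_univ i, lt_of_le_of_ne (sq_nonneg _) (Ne.symm (pow_ne_zero 2 hi))⟩
  set s : ℝ := Real.sqrt (∑ i, x i ^ 2) with hs
  set t : ℝ := Real.sqrt (∑ i, y i ^ 2) with ht
  have hs0 : 0 < s := Real.sqrt_pos.mpr hx2
  have ht0 : 0 < t := Real.sqrt_pos.mpr hy2
  have hs2 : s ^ 2 = ∑ i, x i ^ 2 := Real.sq_sqrt hx2.le
  have ht2 : t ^ 2 = ∑ i, y i ^ 2 := Real.sq_sqrt hy2.le
  set u : Fin n → ℝ := s⁻¹ • x with hudef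
  set v : Fin n → ℝ := t⁻¹ • y with hvdef
  have hu : (∑ i, u i ^ 2) = 1 := by
    rw [hudef]
    have : ∑ i, (s⁻¹ • x) i ^ 2 = s⁻¹ ^ 2 * ∑ i, x i ^ 2 := by
      rw [Finset.mul_sum]
      exact Finset.sum_congr rfl fun i _ => by simp [Pi.smul_apply, smul_eq_mul]; ring
    rw [this, ← hs2]
    field_simp
  have hv : (∑ i, v i ^ 2) = 1 := by
    rw [hvdef]
    have : ∑ i, (t⁻¹ • y) i ^ 2 = t⁻¹ ^ 2 * ∑ i, y i ^ 2 := by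
      rw [Finset.mul_sum]
      exact Finset.sum_congr rfl fun i _ => by simp [Pi.smul_apply, smul_eq_mul]; ring
    rw [this, ← ht2]
    field_simp
  have hxu : x = s • u := (smul_inv_smul₀ hs0.ne' x).symm
  have hyv : y = t • v := (smul_inv_smul₀ ht0.ne' y).symm
  -- scaling of the Hessian form for homogeneous polynomials of degree d
  have hscale : ∀ (q : MvPolynomial (Fin n) ℝ), q.IsHomogeneous d →
      ∑ j, ∑ i, y i * y j * eval x (pderiv j (pderiv i q))
        = s ^ (d - 2) * t ^ 2 * ∑ j, ∑ i, v i * v j * eval u (pderiv j (pderiv i q)) := by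
    intro q hq
    have key : ∀ i j : Fin n, eval x (pderiv j (pderiv i q))
        = s ^ (d - 2) * eval u (pderiv j (pderiv i q)) := by
      intro i j
      have h1 : (pderiv j (pderiv i q)).IsHomogeneous (d - 2) := by
        have h0 := aux_pderiv_homog (aux_pderiv_homog hq i) j
        rwa [show d - 1 - 1 = d - 2 from by omega] at h0
      rw [hxu, aux_eval_smul h1]
    rw [Finset.mul_sum, Finset.sum_congr rfl (fun j _ => ?_)]
    rw [Finset.mul_sum]
    refine Finset.sum_congr rfl fun i _ => ?_
    rw [key i j, hyv]
    simp only [Pi.smul_apply, smul_eq_mul]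
    ring
  -- homogeneity of N ^ k
  have hNk : (N ^ k).IsHomogeneous d := by
    have hNh : N.IsHomogeneous 2 := by
      rw [hNdef]
      exact IsHomogeneous.sum _ _ _ fun l _ => by
        simpa using (isHomogeneous_X ℝ l).pow 2
    have := hNh.pow k
    rwa [h2k] at this
  rw [hsplit x y, hscale p hp, hscale (N ^ k) hNk]
  -- lower bound for the Hessian of p on the bisphere
  have he : fderiv ℝ (fun z => fderiv ℝ f z v) u v
      = ∑ j, ∑ i, v i * v j * eval u (pderiv j (pderiv i p)) := by
    rw [hf]; exact aux_snd_eval p u v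
  have hlow : fmin ≤ ∑ j, ∑ i, v i * v j * eval u (pderiv j (pderiv i p)) :=
    hfmin.2 ⟨u, v, hu, hv, he.symm⟩
  have hfminpos : 0 < fmin := by
    obtain ⟨x0, y0, hx0, hy0, hveq⟩ := hfmin.1
    rw [hveq]
    exact hpos x0 y0 hx0 hy0
  -- upper bound for the Hessian of N^k on the bisphere
  have hHN : ∑ j, ∑ i, v i * v j * eval u (pderiv j (pderiv i (N ^ k)))
      = 4 * k * ((k - 1 : ℕ) : ℝ) * (∑ i, u i * v i) ^ 2 + 2 * k * (∑ i, v i ^ 2) := by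
    rw [hNdef]
    exact aux_hess_Npow k u v hu
  have hCS : (∑ i, u i * v i) ^ 2 ≤ 1 := by
    calc (∑ i, u i * v i) ^ 2 ≤ (∑ i, u i ^ 2) * (∑ i, v i ^ 2) :=
          Finset.sum_mul_sq_le_sq_mul_sq _ _ _
      _ = 1 := by rw [hu, hv]; ring
  have hcastk : ((k - 1 : ℕ) : ℝ) = (k : ℝ) - 1 := by
    rw [Nat.cast_sub hk1]; norm_num
  have hdk : (d : ℝ) = 2 * (k : ℝ) := by
    rw [← h2k]; push_cast; ring
  have hHNle : ∑ j, ∑ i, v i * v j * eval u (pderiv j (pderiv i (N ^ k)))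
      ≤ (d : ℝ) * ((d : ℝ) - 1) := by
    rw [hHN, hv, hcastk, hdk]
    have h1 : 4 * (k:ℝ) * ((k:ℝ) - 1) * (∑ i, u i * v i) ^ 2 ≤ 4 * (k:ℝ) * ((k:ℝ) - 1) := by
      have hnn : 0 ≤ 4 * (k:ℝ) * ((k:ℝ) - 1) := by
        have : (1:ℝ) ≤ (k:ℝ) := by exact_mod_cast hk1
        nlinarith
      nlinarith [hCS, sq_nonneg (∑ i, u i * v i)]
    nlinarith
  -- putting it together
  have hdR : (2:ℝ) ≤ (d:ℝ) := by exact_mod_cast hd2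
  have hcd : c * ((d:ℝ) * ((d:ℝ) - 1)) = fmin / 2 := by
    have h3 : (0:ℝ) < 2 * (d:ℝ) * ((d:ℝ) - 1) := by nlinarith
    rw [hc, div_mul_eq_mul_div, div_eq_div_iff h3.ne' two_ne_zero]
    ring
  have hcpos : 0 < c := by
    rw [hc]
    apply div_pos hfminpos
    nlinarith
  have hfactor : fmin / 2 ≤ (∑ j, ∑ i, v i * v j * eval u (pderiv j (pderiv i p)))
      - c * ∑ j, ∑ i, v i * v j * eval u (pderiv j (pderiv i (N ^ k))) := by
    have h1 : c * ∑ j, ∑ i, v i * v j * eval u (pderiv j (pderiv i (N ^ k)))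
        ≤ c * ((d:ℝ) * ((d:ℝ) - 1)) := by
      exact mul_le_mul_of_nonneg_left hHNle hcpos.le
    rw [hcd] at h1
    linarith
  have hpos2 : 0 < (∑ j, ∑ i, v i * v j * eval u (pderiv j (pderiv i p)))
      - c * ∑ j, ∑ i, v i * v j * eval u (pderiv j (pderiv i (N ^ k))) := by
    have : 0 < fmin / 2 := by linarith
    linarith
  have hrw : s ^ (d - 2) * t ^ 2 * (∑ j, ∑ i, v i * v j * eval u (pderiv j (pderiv i p)))
      - c * (s ^ (d - 2) * t ^ 2 * ∑ j, ∑ i, v i * v j * eval u (pderiv j (pderiv i (N ^ k))))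
      = s ^ (d - 2) * t ^ 2 * ((∑ j, ∑ i, v i * v j * eval u (pderiv j (pderiv i p)))
        - c * ∑ j, ∑ i, v i * v j * eval u (pderiv j (pderiv i (N ^ k)))) := by ring
  rw [hrw]
  have hst : 0 < s ^ (d - 2) * t ^ 2 := by positivity
  exact mul_pos hst hpos2
end

section
/- An n×n symmetric matrix M is diagonally dominant with nonnegative diagonal if and only if it can be written as M = Σᵢ αᵢ vᵢvᵢᵀ with αᵢ ≥ 0, where {vᵢ} ranges over all nonzero vectors in ℝⁿ with at most 2 nonzero components, each equal to ±1. -/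
open Matrix

/-- Barker–Carlson: a symmetric `n×n` matrix `M` is diagonally dominant with nonnegative
diagonal if and only if it is a nonnegative combination `Σ αₖ vₖvₖᵀ` of rank-one matrices
built from nonzero vectors with at most two nonzero components, each equal to `±1`. -/
theorem stmt_15 {n : ℕ} (M : Matrix (Fin n) (Fin n) ℝ) (hM : M.IsSymm) :
    ((∀ i, 0 ≤ M i i) ∧ ∀ i, ∑ j ∈ Finset.univ.erase i, |M i j| ≤ M i i) ↔
    ∃ (N : ℕ) (α : Fin N → ℝ) (v : Fin N → Fin n → ℝ),
      (∀ k, 0 ≤ α k) ∧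
      (∀ k, v k ≠ 0 ∧
        (Finset.univ.filter fun i => v k i ≠ 0).card ≤ 2 ∧
        ∀ i, v k i = 0 ∨ v k i = 1 ∨ v k i = -1) ∧
      M = ∑ k, α k • vecMulVec (v k) (v k) := by
  constructor
  · rintro ⟨h0, hd⟩
    have hsymm : ∀ i j, M j i = M i j := fun i j => hM.apply i j
    set d : Fin n → ℝ := fun i => ∑ j ∈ Finset.univ.erase i, |M i j| with hd'
    set s : Fin n → Fin n → ℝ := fun i j => if 0 ≤ M i j then 1 else -1 with hs'
    have hsmul : ∀ i j, s i j * |M i j| = M i j := by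
      intro i j
      by_cases h : 0 ≤ M i j
      · simp [hs', h, abs_of_nonneg h]
      · simp [hs', h, abs_of_neg (lt_of_not_ge h)]
    have hssq : ∀ i j, s i j * s i j = 1 := by
      intro i j; by_cases h : 0 ≤ M i j <;> simp [hs', h]
    -- index type
    let ι := (Fin n) ⊕ (Fin n × Fin n)
    let α : ι → ℝ := Sum.elim (fun i => M i i - d i)
      (fun p => if p.1 < p.2 then |M p.1 p.2| else 0)
    let v : ι → Fin n → ℝ := Sum.elim (fun i k => if k = i then 1 else 0)
      (fun p k => if k = p.1 then 1 else if k = p.2 then s p.1 p.2 else 0)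
    have hαnn : ∀ k, 0 ≤ α k := by
      rintro (i | p)
      · simp only [α, Sum.elim_inl]
        linarith [hd i]
      · simp only [α, Sum.elim_inr]
        split <;> positivity
    have hvok : ∀ k, v k ≠ 0 ∧
        (Finset.univ.filter fun i => v k i ≠ 0).card ≤ 2 ∧
        ∀ i, v k i = 0 ∨ v k i = 1 ∨ v k i = -1 := by
      rintro (i | p)
      · refine ⟨?_, ?_, ?_⟩
        · intro h
          have := congrFun h i
          simp [v] at this
        · have : (Finset.univ.filter fun j => v (Sum.inl i) j ≠ 0) ⊆ {i} := by
            intro j hj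
            simp only [Finset.mem_filter, Finset.mem_singleton, v, Sum.elim_inl] at hj ⊢
            by_contra h; simp [h] at hj
          calc _ ≤ ({i} : Finset (Fin n)).card := Finset.card_le_card this
            _ ≤ 2 := by simp
        · intro j
          by_cases h : j = i <;> simp [v, h]
      · refine ⟨?_, ?_, ?_⟩
        · intro h
          have := congrFun h p.1
          simp [v] at this
        · have : (Finset.univ.filter fun j => v (Sum.inr p) j ≠ 0) ⊆ {p.1, p.2} := by
            intro j hj
            simp only [Finset.mem_filter, Finset.mem_insert, Finset.mem_singleton, v,
              Sum.elim_inr] at hj ⊢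
            by_contra h
            push_neg at h
            exact (Finset.mem_filter.mp hj).2 (by simp [h.1, h.2])
          calc _ ≤ ({p.1, p.2} : Finset (Fin n)).card := Finset.card_le_card this
            _ ≤ 2 := Finset.card_insert_le _ _ |>.trans (by simp)
        · intro j
          simp only [v, Sum.elim_inr]
          split_ifs with h1 h2
          · tauto
          · right
            by_cases h : 0 ≤ M p.1 p.2
            · left; simp [hs', h]
            · right; simp [hs', h]
          · tauto
    have hMsum : M = ∑ k : ι, α k • vecMulVec (v k) (v k) := by
      ext a b
      rw [Matrix.sum_apply]
      simp only [Matrix.smul_apply, vecMulVec_apply, smul_eq_mul]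
      rw [Fintype.sum_sum_type]
      have hfirst : ∑ i : Fin n, α (Sum.inl i) * (v (Sum.inl i) a * v (Sum.inl i) b)
          = if a = b then M a a - d a else 0 := by
        rw [Finset.sum_eq_single a]
        · by_cases h : a = b <;> simp [α, v, h, eq_comm]
        · intro i _ hi
          simp [v, α, Ne.symm hi]
        · simp
      have hsecond : ∑ p : Fin n × Fin n, α (Sum.inr p) * (v (Sum.inr p) a * v (Sum.inr p) b)
          = if a = b then d a else M a b := by
        by_cases hab : a = b
        · subst hab
          rw [if_pos rfl]
          have hterm : ∀ p : Fin n × Fin n,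
              α (Sum.inr p) * (v (Sum.inr p) a * v (Sum.inr p) a) =
              if p.1 < p.2 ∧ (a = p.1 ∨ a = p.2) then |M p.1 p.2| else 0 := by
            rintro ⟨i, j⟩
            simp only [α, v, Sum.elim_inr]
            by_cases hij : i < j
            · by_cases hai : a = i
              · subst hai
                have haj : ¬ (a = j) := fun h => absurd hij (h ▸ lt_irrefl a)
                simp [hij, haj]
              · by_cases haj : a = j
                · subst haj
                  simp [hij, hai, hssq i a]
                · simp [hij, hai, haj]
            · simp [hij]
          have hsplit : ∀ i j : Fin n,
              (if i < j ∧ (a = i ∨ a = j) then |M i j| else 0) =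
              (if i < j ∧ a = i then |M i j| else 0) + (if i < j ∧ a = j then |M i j| else 0) := by
            intro i j
            by_cases hij : i < j
            · by_cases hai : a = i
              · have haj : ¬ a = j := fun h => absurd hij (by rw [← hai, ← h]; exact lt_irrefl a)
                simp [hij, hai, haj]
                intros; omega
              · by_cases haj : a = j
                · simp [hij, hai, haj]
                  intros; omega
                · simp [hij, hai, haj]
            · simp [hij]
          have hrw : (∑ p : Fin n × Fin n, α (Sum.inr p) * (v (Sum.inr p) a * v (Sum.inr p) a))
              = ∑ i, ∑ j, ((if i < j ∧ a = i then |M i j| else 0)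
                + (if i < j ∧ a = j then |M i j| else 0)) := by
            rw [Fintype.sum_prod_type]
            exact Finset.sum_congr rfl fun i _ => Finset.sum_congr rfl fun j _ =>
              (hterm (i, j)).trans (hsplit i j)
          rw [hrw]
          simp only [Finset.sum_add_distrib]
          have hG : ∑ i : Fin n, ∑ j, (if i < j ∧ a = i then |M i j| else 0)
              = ∑ j ∈ Finset.univ.erase a, (if a < j then |M a j| else 0) := by
            rw [Finset.sum_eq_single a]
            · rw [← Finset.sum_erase Finset.univ
                (f := fun j => if a < j ∧ a = a then |M a j| else 0) (a := a) (by simp)]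
              exact Finset.sum_congr rfl fun j _ => by simp
            · intro i _ hia
              exact Finset.sum_eq_zero fun j _ => by simp [Ne.symm hia]
            · simp
          have hH : ∑ i : Fin n, ∑ j, (if i < j ∧ a = j then |M i j| else 0)
              = ∑ j ∈ Finset.univ.erase a, (if j < a then |M a j| else 0) := by
            have hin : ∀ i : Fin n, (∑ j, if i < j ∧ a = j then |M i j| else 0)
                = if i < a then |M i a| else 0 := by
              intro i
              rw [Finset.sum_eq_single a]
              · simp
              · intro j _ hja; simp [Ne.symm hja]
              · simp
            rw [Finset.sum_congr rfl fun i _ => hin i]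
            rw [← Finset.sum_erase Finset.univ
              (f := fun i => if i < a then |M i a| else 0) (a := a) (by simp)]
            exact Finset.sum_congr rfl fun j _ => by rw [hsymm a j]
          rw [hG, hH, ← Finset.sum_add_distrib, hd']
          exact Finset.sum_congr rfl fun j hj => by
            rcases (Finset.ne_of_mem_erase hj).lt_or_gt with h | h
            · simp [h, not_lt.mpr h.le]
            · simp [h, not_lt.mpr h.le]
        · rw [if_neg hab]
          have hab' : a ≠ b := hab
          have hzero : ∀ p : Fin n × Fin n, p ∈ Finset.univ → (∀ hq : p ≠ (a, b) ∧ p ≠ (b, a),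
              α (Sum.inr p) * (v (Sum.inr p) a * v (Sum.inr p) b) = 0) := by
            rintro ⟨i, j⟩ _ ⟨hp1, hp2⟩
            simp only [α, v, Sum.elim_inr]
            by_cases hij : i < j
            · by_cases hai : a = i
              · by_cases hbj : b = j
                · exact absurd (by rw [hai, hbj]) hp1
                · have hbi : ¬ b = i := fun h => hab' (hai.trans h.symm)
                  simp [hbi, hbj]
              · by_cases haj : a = j
                · by_cases hbi : b = i
                  · exact absurd (by rw [haj, hbi]) hp2
                  · by_cases hbj : b = j
                    · exact absurd (haj.trans hbj.symm) hab'
                    · simp [hbi, hbj]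
                · simp [hai, haj]
            · simp [hij]
          rcases hab'.lt_or_gt with h | h
          · rw [Finset.sum_eq_single (a, b)]
            · have hba : ¬ b = a := fun hh => hab' hh.symm
              show (if a < b then |M a b| else 0) *
                ((if a = a then (1:ℝ) else if a = b then s a b else 0) *
                 (if b = a then (1:ℝ) else if b = b then s a b else 0)) = M a b
              rw [if_pos h, if_pos rfl, if_neg hba, if_pos rfl, one_mul,
                mul_comm (|M a b|) (s a b), hsmul]
            · intro p hp hpab
              by_cases hq : p = (b, a)
              · subst hq
                have hlt : ¬ ((b, a).1 < (b, a).2) := asymm h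
                simp only [α, Sum.elim_inr, if_neg hlt, zero_mul]
              · exact hzero p hp ⟨hpab, hq⟩
            · intro hmem; exact absurd (Finset.mem_univ _) hmem
          · rw [Finset.sum_eq_single (b, a)]
            · have hba : ¬ b = a := fun hh => hab' hh.symm
              show (if b < a then |M b a| else 0) *
                ((if a = b then (1:ℝ) else if a = a then s b a else 0) *
                 (if b = b then (1:ℝ) else if b = a then s b a else 0)) = M a b
              rw [if_pos h, if_neg hab, if_pos rfl, if_pos rfl, mul_one,
                mul_comm (|M b a|) (s b a), hsmul, hsymm]
            · intro p hp hpba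
              by_cases hq : p = (a, b)
              · subst hq
                have hlt : ¬ ((a, b).1 < (a, b).2) := asymm h
                simp only [α, Sum.elim_inr, if_neg hlt, zero_mul]
              · exact hzero p hp ⟨hq, hpba⟩
            · intro hmem; exact absurd (Finset.mem_univ _) hmem
      rw [hfirst, hsecond]
      by_cases h : a = b
      · subst h; simp
      · simp [h]
    -- transfer to Fin N
    refine ⟨Fintype.card ι, α ∘ (Fintype.equivFin ι).symm, v ∘ (Fintype.equivFin ι).symm,
      fun k => hαnn _, fun k => hvok _, ?_⟩
    rw [hMsum]
    exact (Fintype.sum_equiv (Fintype.equivFin ι).symm _ _ (fun k => rfl)).symm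
  · rintro ⟨N, α, v, hα, hv, hsum⟩
    have hentry : ∀ a b, M a b = ∑ k, α k * (v k a * v k b) := by
      intro a b
      rw [hsum]
      simp [Matrix.sum_apply, vecMulVec_apply]
    have habs : ∀ k i, |v k i| ≤ 1 := by
      intro k i
      rcases (hv k).2.2 i with h | h | h <;> simp [h]
    constructor
    · intro i
      rw [hentry i i]
      exact Finset.sum_nonneg fun k _ => mul_nonneg (hα k) (mul_self_nonneg _)
    · intro i
      have key : ∀ k, |v k i| * ∑ j ∈ Finset.univ.erase i, |v k j| ≤ v k i * v k i := by
        intro k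
        by_cases h0 : v k i = 0
        · simp [h0]
        · have hv2 := (hv k).2.1
          have h1 : |v k i| = 1 := by
            rcases (hv k).2.2 i with h | h | h <;> simp [h] at h0 ⊢
          have hmem : i ∈ Finset.univ.filter fun j => v k j ≠ 0 := by simp [h0]
          have hsub : ((Finset.univ.erase i).filter fun j => v k j ≠ 0) ⊆
              (Finset.univ.filter fun j => v k j ≠ 0).erase i := by
            intro j hj
            simp only [Finset.mem_filter, Finset.mem_erase, Finset.mem_univ] at hj ⊢
            tauto
          have hcard : (((Finset.univ.erase i).filter fun j => v k j ≠ 0)).card ≤ 1 := by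
            have h2 := Finset.card_le_card hsub
            rw [Finset.card_erase_of_mem hmem] at h2
            omega
          have hsum1 : ∑ j ∈ Finset.univ.erase i, |v k j| ≤ 1 := by
            rw [← Finset.sum_filter_of_ne (p := fun j => v k j ≠ 0)
              (fun x _ hx h => hx (by simp [h]))]
            calc ∑ j ∈ ((Finset.univ.erase i).filter fun j => v k j ≠ 0), |v k j|
                ≤ (((Finset.univ.erase i).filter fun j => v k j ≠ 0)).card • (1:ℝ) :=
                  Finset.sum_le_card_nsmul _ _ 1 (fun j _ => habs k j)
              _ ≤ 1 := by
                  rw [nsmul_eq_mul, mul_one]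
                  exact_mod_cast hcard
          have hvi : (1:ℝ) ≤ v k i * v k i := by nlinarith [sq_abs (v k i), h1]
          calc |v k i| * ∑ j ∈ Finset.univ.erase i, |v k j| ≤ 1 * 1 := by
                rw [h1, one_mul, mul_one]; exact hsum1
            _ ≤ v k i * v k i := by rw [one_mul]; exact hvi
      calc ∑ j ∈ Finset.univ.erase i, |M i j|
          ≤ ∑ j ∈ Finset.univ.erase i, ∑ k, α k * (|v k i| * |v k j|) := by
            apply Finset.sum_le_sum
            intro j _
            rw [hentry i j]
            refine le_trans (Finset.abs_sum_le_sum_abs _ _) (Finset.sum_le_sum fun k _ => ?_)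
            rw [abs_mul, abs_mul, abs_of_nonneg (hα k)]
        _ = ∑ k, α k * (|v k i| * ∑ j ∈ Finset.univ.erase i, |v k j|) := by
            rw [Finset.sum_comm]
            simp only [Finset.mul_sum]
        _ ≤ ∑ k, α k * (v k i * v k i) :=
            Finset.sum_le_sum fun k _ => mul_le_mul_of_nonneg_left (key k) (hα k)
        _ = M i i := (hentry i i).symm
end

section
/- Let f : ℝⁿ → ℝ be C² with Hessian H_f(x) ⪰ 0 on a compact box B, and suppose a polynomial q satisfies max_B |∂²f/∂xᵢ∂xⱼ − ∂²q/∂xᵢ∂xⱼ| ≤ ε/(2(1+2nC)) for all i,j, where C = max_{x∈B}(½Σᵢxᵢ²). Then p(x) := q(x) + (nε/(2(1+2nC)))·xᵀx has positive definite Hessian on B: H_p(x) ⪰ (nε/(2(1+2nC)))·I for all x ∈ B. -/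
lemma clm_apply_eq_sum {n : ℕ} (L : (Fin n → ℝ) →L[ℝ] ℝ) (y : Fin n → ℝ) :
    L y = ∑ j, y j * L (Pi.single j 1) := by
  conv_lhs => rw [← Finset.univ_sum_single y]
  rw [map_sum]
  refine Finset.sum_congr rfl fun j _ => ?_
  have : Pi.single j (y j) = y j • (Pi.single j 1 : Fin n → ℝ) := by
    simp [← Pi.single_smul]
  rw [this, map_smul, smul_eq_mul]

lemma contDiff_mvpoly {n : ℕ} (q : MvPolynomial (Fin n) ℝ) :
    ContDiff ℝ ⊤ (fun x : Fin n → ℝ => MvPolynomial.eval x q) := by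
  induction q using MvPolynomial.induction_on with
  | C a => simpa using contDiff_const (c := a)
  | add p r hp hr => simpa using hp.add hr
  | mul_X p i h =>
      simpa [MvPolynomial.eval_mul] using
        h.mul ((ContinuousLinearMap.proj (R := ℝ) (φ := fun _ : Fin n => ℝ) i).contDiff)

lemma hasFDerivAt_sq_sum {n : ℕ} (z : Fin n → ℝ) :
    HasFDerivAt (fun z : Fin n → ℝ => ∑ i, z i ^ 2)
      (∑ i, (2 * z i) • ContinuousLinearMap.proj (R := ℝ) (φ := fun _ : Fin n => ℝ) i) z := by
  refine HasFDerivAt.fun_sum fun i _ => ?_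
  have h := (ContinuousLinearMap.proj (R := ℝ) (φ := fun _ : Fin n => ℝ) i).hasFDerivAt (x := z)
  have := h.fun_mul h
  simp only [ContinuousLinearMap.proj_apply] at this
  have heq : (2 * z i) • ContinuousLinearMap.proj (R := ℝ) (φ := fun _ : Fin n => ℝ) i
      = z i • ContinuousLinearMap.proj i + z i • ContinuousLinearMap.proj i := by
    rw [two_mul, add_smul]
  rw [heq]
  simpa [pow_two] using this

lemma hess_expand {n : ℕ} (g : (Fin n → ℝ) → ℝ) (x y : Fin n → ℝ)
    (hd : ∀ j : Fin n, DifferentiableAt ℝ (fun z => fderiv ℝ g z (Pi.single j 1)) x) :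
    fderiv ℝ (fun z => fderiv ℝ g z y) x y
      = ∑ j, ∑ i, y j * (y i *
          fderiv ℝ (fun z => fderiv ℝ g z (Pi.single j 1)) x (Pi.single i 1)) := by
  have h1 : (fun z => fderiv ℝ g z y)
      = fun z => ∑ j, y j * fderiv ℝ g z (Pi.single j 1) :=
    funext fun z => clm_apply_eq_sum _ y
  rw [h1, fderiv_fun_sum (fun j _ => (hd j).const_mul (y j))]
  rw [ContinuousLinearMap.sum_apply]
  refine Finset.sum_congr rfl fun j _ => ?_
  rw [fderiv_const_mul (hd j) (y j), ContinuousLinearMap.smul_apply, smul_eq_mul,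
    clm_apply_eq_sum, Finset.mul_sum]

/-- If `f` is `C²` with `H_f(x) ⪰ 0` on a box `B`, and a polynomial `q` approximates all
second partial derivatives of `f` on `B` entrywise within `ε/(2(1+2nC))` where
`C = max_B (½Σᵢxᵢ²)`, then `p(x) := q(x) + (nε/(2(1+2nC)))·xᵀx` satisfies
`H_p(x) ⪰ (nε/(2(1+2nC)))·I` on `B`. -/
theorem stmt_19 {n : ℕ} (f : (Fin n → ℝ) → ℝ) (hf : ContDiff ℝ 2 f)
    (a b : Fin n → ℝ) (B : Set (Fin n → ℝ))
    (hB : B = Set.univ.pi fun i => Set.Icc (a i) (b i))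
    (ε C : ℝ) (hε : 0 < ε)
    (hC : IsGreatest ((fun x : Fin n → ℝ => (1 / 2) * ∑ i, x i ^ 2) '' B) C)
    (hpsd : ∀ x ∈ B, ∀ y : Fin n → ℝ, 0 ≤ fderiv ℝ (fun z => fderiv ℝ f z y) x y)
    (q : MvPolynomial (Fin n) ℝ)
    (hq : ∀ (i j : Fin n), ∀ x ∈ B,
      |fderiv ℝ (fun z => fderiv ℝ f z (Pi.single j 1)) x (Pi.single i 1) -
        fderiv ℝ (fun z => fderiv ℝ (fun w => MvPolynomial.eval w q) z (Pi.single j 1)) x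
          (Pi.single i 1)| ≤ ε / (2 * (1 + 2 * (n : ℝ) * C)))
    (p : (Fin n → ℝ) → ℝ)
    (hp : p = fun x => MvPolynomial.eval x q +
      ((n : ℝ) * ε / (2 * (1 + 2 * (n : ℝ) * C))) * ∑ i, x i ^ 2) :
    ∀ x ∈ B, ∀ y : Fin n → ℝ,
      ((n : ℝ) * ε / (2 * (1 + 2 * (n : ℝ) * C))) * (∑ i, y i ^ 2) ≤
        fderiv ℝ (fun z => fderiv ℝ p z y) x y := by
  intro x hx y
  -- positivity of the denominator
  have hC0 : 0 ≤ C := by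
    obtain ⟨x₀, -, hx₀⟩ := hC.1
    rw [← hx₀]; positivity
  have hD : 0 < 2 * (1 + 2 * (n : ℝ) * C) := by positivity
  set δ : ℝ := ε / (2 * (1 + 2 * (n : ℝ) * C)) with hδdef
  set c : ℝ := (n : ℝ) * ε / (2 * (1 + 2 * (n : ℝ) * C)) with hcdef
  have hδ0 : 0 ≤ δ := le_of_lt (by positivity)
  have hcδ : c = (n : ℝ) * δ := by rw [hcdef, hδdef, mul_div_assoc]
  set qfun : (Fin n → ℝ) → ℝ := fun w => MvPolynomial.eval w q with hqfun
  have hqs : ContDiff ℝ ⊤ qfun := contDiff_mvpoly q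
  -- differentiability of the partial derivative maps
  have hf1 : ContDiff ℝ 1 (fderiv ℝ f) := hf.fderiv_right (by norm_num)
  have hq1 : ContDiff ℝ 1 (fderiv ℝ qfun) := hqs.fderiv_right le_top
  have hfd : ∀ v : Fin n → ℝ, DifferentiableAt ℝ (fun z => fderiv ℝ f z v) x :=
    fun v => ((hf1.clm_apply contDiff_const).differentiable one_ne_zero).differentiableAt
  have hqd : ∀ v : Fin n → ℝ, DifferentiableAt ℝ (fun z => fderiv ℝ qfun z v) x :=
    fun v => ((hq1.clm_apply contDiff_const).differentiable one_ne_zero).differentiableAt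
  -- first derivative of p
  have hps : ∀ z, fderiv ℝ p z = fderiv ℝ qfun z +
      c • (∑ i, (2 * z i) • ContinuousLinearMap.proj (R := ℝ) (φ := fun _ : Fin n => ℝ) i) := by
    intro z
    have h1 : HasFDerivAt qfun (fderiv ℝ qfun z) z :=
      ((hqs.differentiable (by simp)) z).hasFDerivAt
    have h2 := (hasFDerivAt_sq_sum z).const_mul c
    have := h1.add h2
    rw [hp]
    exact this.fderiv
  -- the linear map corresponding to the quadratic correction's Hessian row
  set T : (Fin n → ℝ) →L[ℝ] ℝ :=
    ∑ i, (c * (2 * y i)) • ContinuousLinearMap.proj (R := ℝ) (φ := fun _ : Fin n => ℝ) i with hT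
  have hsplit : (fun z => fderiv ℝ p z y) = fun z => fderiv ℝ qfun z y + T z := by
    funext z
    rw [hps z]
    simp only [ContinuousLinearMap.add_apply, ContinuousLinearMap.smul_apply,
      ContinuousLinearMap.sum_apply, ContinuousLinearMap.proj_apply, smul_eq_mul, hT,
      Finset.mul_sum]
    congr 1
    exact Finset.sum_congr rfl fun i _ => by ring
  have hTy : T y = 2 * c * ∑ i, y i ^ 2 := by
    simp only [hT, ContinuousLinearMap.sum_apply, ContinuousLinearMap.smul_apply,
      ContinuousLinearMap.proj_apply, smul_eq_mul, Finset.mul_sum]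
    exact Finset.sum_congr rfl fun i _ => by ring
  have hHp : fderiv ℝ (fun z => fderiv ℝ p z y) x y
      = fderiv ℝ (fun z => fderiv ℝ qfun z y) x y + 2 * c * ∑ i, y i ^ 2 := by
    rw [hsplit, fderiv_fun_add (hqd y) T.differentiableAt, ContinuousLinearMap.add_apply,
      T.fderiv, hTy]
  -- expand the Hessians
  have hHq := hess_expand qfun x y fun j => hqd (Pi.single j 1)
  have hHf := hess_expand f x y fun j => hfd (Pi.single j 1)
  have hfpos := hpsd x hx y
  rw [hHf] at hfpos
  -- entrywise bound
  have hbound : ∀ j i : Fin n,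
      y j * (y i * fderiv ℝ (fun z => fderiv ℝ f z (Pi.single j 1)) x (Pi.single i 1))
        - |y j| * |y i| * δ
      ≤ y j * (y i * fderiv ℝ (fun z => fderiv ℝ qfun z (Pi.single j 1)) x (Pi.single i 1)) := by
    intro j i
    have h := hq i j x hx
    set A := fderiv ℝ (fun z => fderiv ℝ f z (Pi.single j 1)) x (Pi.single i 1)
    set Q := fderiv ℝ (fun z => fderiv ℝ qfun z (Pi.single j 1)) x (Pi.single i 1)
    have h2 : y j * (y i * A) - y j * (y i * Q) ≤ |y j| * |y i| * δ := by
      have : y j * (y i * A) - y j * (y i * Q) = (y j * y i) * (A - Q) := by ring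
      rw [this]
      calc (y j * y i) * (A - Q) ≤ |(y j * y i) * (A - Q)| := le_abs_self _
        _ = |y j| * |y i| * |A - Q| := by rw [abs_mul, abs_mul]
        _ ≤ |y j| * |y i| * δ := by
            apply mul_le_mul_of_nonneg_left h (by positivity)
    linarith
  -- sum the bounds
  have hsum : (∑ j, ∑ i, y j * (y i *
        fderiv ℝ (fun z => fderiv ℝ f z (Pi.single j 1)) x (Pi.single i 1)))
      - (∑ j, |y j|) * (∑ i, |y i|) * δ
      ≤ ∑ j, ∑ i, y j * (y i *
        fderiv ℝ (fun z => fderiv ℝ qfun z (Pi.single j 1)) x (Pi.single i 1)) := by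
    have h1 : (∑ j, |y j|) * (∑ i, |y i|) * δ = ∑ j, ∑ i, |y j| * |y i| * δ := by
      rw [Finset.sum_mul_sum]
      rw [Finset.sum_mul]
      exact Finset.sum_congr rfl fun j _ => by rw [Finset.sum_mul]
    rw [h1, ← Finset.sum_sub_distrib]
    refine Finset.sum_le_sum fun j _ => ?_
    rw [← Finset.sum_sub_distrib]
    exact Finset.sum_le_sum fun i _ => hbound j i
  have hcs : (∑ i, |y i|) * (∑ i, |y i|) ≤ (n : ℝ) * ∑ i, y i ^ 2 := by
    have := sq_sum_le_card_mul_sum_sq (s := (Finset.univ : Finset (Fin n))) (f := fun i => |y i|)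
    simp only [Finset.card_univ, Fintype.card_fin, sq_abs] at this
    calc (∑ i, |y i|) * (∑ i, |y i|) = (∑ i, |y i|) ^ 2 := (sq _).symm
      _ ≤ (n : ℝ) * ∑ i, y i ^ 2 := by exact_mod_cast this
  -- conclude
  rw [hHp, hHq]
  have hlow : -((n : ℝ) * δ * ∑ i, y i ^ 2) ≤ ∑ j, ∑ i, y j * (y i *
      fderiv ℝ (fun z => fderiv ℝ qfun z (Pi.single j 1)) x (Pi.single i 1)) := by
    have h2 : (∑ j, |y j|) * (∑ i, |y i|) * δ ≤ (n : ℝ) * δ * ∑ i, y i ^ 2 := by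
      calc (∑ j, |y j|) * (∑ i, |y i|) * δ ≤ ((n : ℝ) * ∑ i, y i ^ 2) * δ :=
            mul_le_mul_of_nonneg_right hcs hδ0
        _ = (n : ℝ) * δ * ∑ i, y i ^ 2 := by ring
    linarith
  rw [hcδ]
  linarith
end
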